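/- arXiv:1207.1007 — 8 statements merged into one kernel-verified Lean document; each statement's English description precedes it below -/
import Mathlib

section
/- Let F be a Borel probability measure on [0,1]. For every g ∈ C²([0,1]) and every x ∈ [0,1]: ∫_{[0,1]} [ x ( g(x(1−y)+y) − g(x) ) + (1−x) ( g(x(1−y)) − g(x) ) ] y^{−2} F(dy) = (1/2) x(1−x) · E[ g''( x(1−W) + W V ) ], where the integrand on the left is extended continuously at y = 0 by its limit (1/2) x(1−x) g''(x). -/
open MeasureTheory Set


lemma inner_int (f : ℝ → ℝ) (hf : ContDiff ℝ 1 f) (a b : ℝ) (hb : b ≠ 0) :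
    (∫ v in Set.Ioo (0:ℝ) 1, deriv f (a + b*v)) = (f (a+b) - f a)/b := by
  have hcd : Continuous (deriv f) := hf.continuous_deriv le_rfl
  have h1 : (∫ v in Set.Ioo (0:ℝ) 1, deriv f (a + b*v))
      = ∫ v in (0:ℝ)..1, deriv f (b*v + a) := by
    rw [intervalIntegral.integral_of_le (by norm_num), integral_Ioc_eq_integral_Ioo]
    simp only [add_comm]
  rw [h1, intervalIntegral.integral_comp_mul_add (deriv f) hb a]
  have h2 : (∫ x in (b*0+a)..(b*1+a), deriv f x) = f (b*1+a) - f (b*0+a) := by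
    apply intervalIntegral.integral_deriv_eq_sub
    · intro x _; exact (hf.differentiable one_ne_zero).differentiableAt
    · exact hcd.intervalIntegrable _ _
  rw [h2]
  simp only [mul_zero, zero_add, mul_one, smul_eq_mul]
  ring

lemma key (g : ℝ → ℝ) (hg : ContDiff ℝ 2 g) (x y : ℝ) :
    (if y = (0:ℝ) then (1/2) * x * (1-x) * deriv (deriv g) x
      else (x * (g (x*(1-y) + y) - g x) + (1-x) * (g (x*(1-y)) - g x)) / y ^ 2)
    = (1/2) * x * (1-x) *
        ∫ u in Set.Ioo (0:ℝ) 1, (∫ v in Set.Ioo (0:ℝ) 1,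
          deriv (deriv g) (x*(1 - u*y) + u*y*v)) * (2*u) := by
  have hg0 : ContDiff ℝ 1 g := hg.of_le (by norm_num)
  have hg1 : ContDiff ℝ 1 (deriv g) := (contDiff_succ_iff_deriv.mp (show ContDiff ℝ (1+1) g by norm_num; exact hg)).2.2
  have hG2 : Continuous (deriv (deriv g)) := hg1.continuous_deriv le_rfl
  have hG1 : Continuous (deriv g) := hg1.continuous
  by_cases hy : y = 0
  · subst hy
    rw [if_pos rfl]
    have h1 : ∀ u : ℝ, (∫ v in Set.Ioo (0:ℝ) 1,
        deriv (deriv g) (x*(1 - u*0) + u*0*v)) * (2*u) = deriv (deriv g) x * (2*u) := by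
      intro u
      have : ∀ v : ℝ, x*(1 - u*0) + u*0*v = x := by intro v; ring
      simp only [this, setIntegral_const, Real.volume_Ioo, smul_eq_mul]
      norm_num
    simp only [h1]
    rw [integral_const_mul]
    have h2 : (∫ u in Set.Ioo (0:ℝ) 1, 2*u) = 1 := by
      rw [← integral_Ioc_eq_integral_Ioo, ← intervalIntegral.integral_of_le (by norm_num)]
      rw [intervalIntegral.integral_const_mul, integral_id]; norm_num
    rw [h2]; ring
  rw [if_neg hy]
  by_cases hx0 : x = 0
  · subst hx0; norm_num
  by_cases hx1 : x = 1
  · subst hx1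
    have h1 : (1:ℝ)*(1-y) + y = 1 := by ring
    rw [h1]; norm_num
  -- main case
  have step1 : (∫ u in Set.Ioo (0:ℝ) 1, (∫ v in Set.Ioo (0:ℝ) 1,
      deriv (deriv g) (x*(1 - u*y) + u*y*v)) * (2*u))
      = ∫ u in Set.Ioo (0:ℝ) 1,
          (2/y) * (deriv g (x + (y*(1-x))*u) - deriv g (x + (-(y*x))*u)) := by
    apply setIntegral_congr_fun measurableSet_Ioo
    intro u hu
    have huy : u*y ≠ 0 := mul_ne_zero (ne_of_gt hu.1) hy
    have e0 : ∀ v : ℝ, x*(1 - u*y) + u*y*v = (x*(1 - u*y)) + (u*y)*v := by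
      intro v; ring
    simp only [e0]
    rw [inner_int (deriv g) hg1 _ _ huy]
    have e1 : x*(1 - u*y) + u*y = x + (y*(1-x))*u := by ring
    have e2 : x*(1 - u*y) = x + (-(y*x))*u := by ring
    rw [e1, e2]
    have hu0 : u ≠ 0 := ne_of_gt hu.1
    field_simp
  rw [step1]
  have hint : ∀ c : ℝ, IntegrableOn (fun u => deriv g (x + c*u)) (Set.Ioo (0:ℝ) 1) := by
    intro c
    exact ((hG1.comp (by continuity)).continuousOn.integrableOn_Icc).mono_set
      Set.Ioo_subset_Icc_self
  rw [integral_const_mul, integral_sub (hint _) (hint _)]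
  have hb1 : y*(1-x) ≠ 0 := mul_ne_zero hy (sub_ne_zero.mpr (Ne.symm hx1))
  have hb2 : -(y*x) ≠ 0 := neg_ne_zero.mpr (mul_ne_zero hy hx0)
  have i1 : (∫ u in Set.Ioo (0:ℝ) 1, deriv g (x + (y*(1-x))*u))
      = (g (x + y*(1-x)) - g x)/(y*(1-x)) := inner_int g hg0 x _ hb1
  have i2 : (∫ u in Set.Ioo (0:ℝ) 1, deriv g (x + (-(y*x))*u))
      = (g (x + -(y*x)) - g x)/(-(y*x)) := inner_int g hg0 x _ hb2
  rw [i1, i2]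
  have a1 : x + y*(1-x) = x*(1-y) + y := by ring
  have a2 : x + -(y*x) = x*(1-y) := by ring
  rw [a1, a2]
  have hx1' : (1:ℝ) - x ≠ 0 := sub_ne_zero.mpr (Ne.symm hx1)
  field_simp
  ring


/-- the two-type Λ-Fleming-Viot generator as a Wright-Fisher generator with a
random linear argument.  Here `Y` has law `F`, `U` has density `2u` on `(0,1)`, `V` is uniform
on `(0,1)`, `W = U⬝Y`, and the expectation over `(W,V)` is written as the explicit iterated
integral. -/
theorem stmt1 (F : Measure ℝ) [IsProbabilityMeasure F]
    (hF : F (Set.Icc (0:ℝ) 1)ᶜ = 0)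
    (g : ℝ → ℝ) (hg : ContDiff ℝ 2 g)
    (x : ℝ) (hx : x ∈ Set.Icc (0:ℝ) 1) :
    (∫ y, (if y = (0:ℝ) then (1/2) * x * (1-x) * deriv (deriv g) x
      else (x * (g (x*(1-y) + y) - g x) + (1-x) * (g (x*(1-y)) - g x)) / y ^ 2) ∂F)
    = (1/2) * x * (1-x) *
        ∫ y, (∫ u in Set.Ioo (0:ℝ) 1, (∫ v in Set.Ioo (0:ℝ) 1,
          deriv (deriv g) (x*(1 - u*y) + u*y*v)) * (2*u)) ∂F := by
  rw [← integral_const_mul]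
  exact integral_congr_ae (Filter.Eventually.of_forall (fun y => key g hg x y))
end

section
/- Let F be a Borel probability measure on [0,1], let Y have distribution F and let U be independent of Y with density 2u on (0,1), and set W = U·Y. Then P(W = 0) = F({0}), and for every bounded Borel measurable function h : [0,1] → ℝ, E[ h(W) · 1_{W>0} ] = ∫_0^1 h(w) · 2w F⁺(w) dw, where F⁺(w) = ∫_{(w,1]} y^{−2} F(dy); that is, on (0,1] the random variable W has density f_W(w) = 2w F⁺(w). -/
open MeasureTheory Set

/-- `F⁺(w) = ∫_{(w,1]} y⁻² F(dy)`. -/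
noncomputable def Fplus (F : Measure ℝ) (w : ℝ) : ℝ :=
  ∫ y in Set.Ioc w 1, (y ^ 2)⁻¹ ∂F

/-- if `Y ∼ F` and `U` has density `2u` on `(0,1)` are independent and
`W = U⬝Y`, then `P(W = 0) = F({0})` and on `(0,1]` the random variable `W` has density
`f_W(w) = 2w F⁺(w)`. -/
theorem stmt2 {Ω : Type*} [MeasurableSpace Ω] (ℙ : Measure Ω) [IsProbabilityMeasure ℙ]
    (F : Measure ℝ) [IsProbabilityMeasure F] (hF : F (Set.Icc (0:ℝ) 1)ᶜ = 0)
    (Y U : Ω → ℝ) (hY : Measurable Y) (hU : Measurable U)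
    (hInd : ProbabilityTheory.IndepFun Y U ℙ)
    (hYlaw : Measure.map Y ℙ = F)
    (hUlaw : Measure.map U ℙ =
      (volume.restrict (Set.Ioo (0:ℝ) 1)).withDensity (fun u => ENNReal.ofReal (2 * u))) :
    ℙ {ω | U ω * Y ω = 0} = F {0} ∧
    ∀ h : ℝ → ℝ, Measurable h → (∃ C, ∀ x, |h x| ≤ C) →
      (∫ ω, Set.indicator {ω' | 0 < U ω' * Y ω'} (fun ω' => h (U ω' * Y ω')) ω ∂ℙ)
        = ∫ w in Set.Ioo (0:ℝ) 1, h w * (2 * w * Fplus F w) := by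
  classical
  set ν : Measure ℝ := volume.restrict (Set.Ioo (0:ℝ) 1) with hνdef
  set μU : Measure ℝ := ν.withDensity (fun u => ENNReal.ofReal (2 * u)) with hμUdef
  haveI hPμU : IsProbabilityMeasure μU := hUlaw ▸ Measure.isProbabilityMeasure_map hU.aemeasurable
  have hUae : ∀ᵐ ω ∂ℙ, U ω ∈ Set.Ioo (0:ℝ) 1 := by
    rw [ae_iff]
    have h0 : {ω | ¬ U ω ∈ Set.Ioo (0:ℝ) 1} = U ⁻¹' (Set.Ioo (0:ℝ) 1)ᶜ := rfl
    rw [h0, ← Measure.map_apply hU measurableSet_Ioo.compl, hUlaw, hμUdef,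
      withDensity_apply _ measurableSet_Ioo.compl, hνdef,
      Measure.restrict_restrict measurableSet_Ioo.compl]
    simp
  constructor
  · -- Part 1
    have h1 : ℙ {ω | U ω * Y ω = 0} = ℙ (Y ⁻¹' {0}) := by
      apply measure_congr
      rw [Filter.eventuallyEq_set]
      filter_upwards [hUae] with ω hω
      simp only [Set.mem_setOf_eq, Set.mem_preimage, Set.mem_singleton_iff]
      constructor
      · intro hm
        rcases mul_eq_zero.1 hm with hm | hm
        · exact absurd hm (ne_of_gt hω.1)
        · exact hm
      · intro hm; rw [hm, mul_zero]
    rw [h1, ← Measure.map_apply hY (measurableSet_singleton 0), hYlaw]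
  · -- Part 2
    rintro h hh ⟨C, hC⟩
    have hC0 : (0:ℝ) ≤ C := le_trans (abs_nonneg _) (hC 0)
    set G : ℝ × ℝ → ℝ :=
      fun p => Set.indicator {q : ℝ × ℝ | 0 < q.2 * q.1} (fun q => h (q.2 * q.1)) p with hGdef
    have hGmeas : Measurable G :=
      Measurable.indicator (hh.comp (measurable_snd.mul measurable_fst))
        (measurableSet_lt measurable_const (measurable_snd.mul measurable_fst))
    have hGapp : ∀ p : ℝ × ℝ, G p
        = Set.indicator {q : ℝ × ℝ | 0 < q.2 * q.1} (fun q => h (q.2 * q.1)) p :=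
      fun _ => rfl
    have hGbound : ∀ p, ‖G p‖ ≤ C := by
      intro p
      rw [Real.norm_eq_abs, hGapp]
      by_cases hp : p ∈ {q : ℝ × ℝ | 0 < q.2 * q.1}
      · rw [Set.indicator_of_mem hp]; exact hC (p.2 * p.1)
      · rw [Set.indicator_of_notMem hp]; simpa using hC0
    have hjoint : Measure.map (fun ω => (Y ω, U ω)) ℙ = F.prod μU := by
      rw [(ProbabilityTheory.indepFun_iff_map_prod_eq_prod_map_map hY.aemeasurable
        hU.aemeasurable).mp hInd, hYlaw, hUlaw]
    have hGint : Integrable G (F.prod μU) :=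
      (integrable_const C).mono' hGmeas.aestronglyMeasurable
        (Filter.Eventually.of_forall hGbound)
    set Φ : ℝ → ℝ → ℝ :=
      fun y w => Set.indicator (Set.Ioc w 1) (fun y' => (y' ^ 2)⁻¹) y * (h w * (2 * w))
      with hΦdef
    have hΦapp : ∀ y w : ℝ, Φ y w
        = Set.indicator (Set.Ioc w 1) (fun y' => (y' ^ 2)⁻¹) y * (h w * (2 * w)) :=
      fun _ _ => rfl
    have hΦuncurry : Function.uncurry Φ =
        fun p : ℝ × ℝ => Set.indicator {q : ℝ × ℝ | q.2 < q.1 ∧ q.1 ≤ 1}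
          (fun q => (q.1 ^ 2)⁻¹) p * (h p.2 * (2 * p.2)) := by
      funext p
      simp only [Function.uncurry, hΦdef, Set.indicator_apply, Set.mem_Ioc, Set.mem_setOf_eq]
    have hΦmeas : Measurable (Function.uncurry Φ) := by
      rw [hΦuncurry]
      exact (Measurable.indicator ((measurable_fst.pow_const 2).inv)
        ((measurableSet_lt measurable_snd measurable_fst).inter
          (measurableSet_le measurable_fst measurable_const))).mul
        ((hh.comp measurable_snd).mul (measurable_const.mul measurable_snd))
    -- bound on the indicator factor
    have hIndBound : ∀ y w : ℝ, |Set.indicator (Set.Ioc w 1) (fun y' => (y' ^ 2)⁻¹) y| ≤ (y ^ 2)⁻¹ := by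
      intro y w
      by_cases hyw : y ∈ Set.Ioc w 1
      · rw [Set.indicator_of_mem hyw, abs_of_nonneg (by positivity)]
      · rw [Set.indicator_of_notMem hyw]; simpa using by positivity
    -- integrability of uncurry Φ on the product
    have hΦint : Integrable (Function.uncurry Φ) (F.prod ν) := by
      refine (integrable_prod_iff hΦmeas.aestronglyMeasurable).2 ⟨?_, ?_⟩
      · refine Filter.Eventually.of_forall fun y => ?_
        refine (integrable_const ((y ^ 2)⁻¹ * (C * 2))).mono'
          ((hΦmeas.comp measurable_prodMk_left).aestronglyMeasurable) ?_
        filter_upwards [ae_restrict_mem measurableSet_Ioo] with w hw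
        have h1 : |h w * (2 * w)| ≤ C * 2 := by
          rw [abs_mul]
          have : |2 * w| ≤ 2 := by
            rw [abs_of_nonneg (by linarith [hw.1])]; linarith [hw.2]
          exact mul_le_mul (hC w) this (abs_nonneg _) hC0
        calc ‖Φ y w‖ = |Set.indicator (Set.Ioc w 1) (fun y' => (y' ^ 2)⁻¹) y| * |h w * (2 * w)| := by
              rw [Real.norm_eq_abs, hΦapp, abs_mul]
          _ ≤ (y ^ 2)⁻¹ * (C * 2) :=
              mul_le_mul (hIndBound y w) h1 (abs_nonneg _) (by positivity)
      · refine (integrable_const C).mono'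
          (hΦmeas.norm.aestronglyMeasurable.integral_prod_right') ?_
        refine Filter.Eventually.of_forall fun y => ?_
        have hnn : 0 ≤ ∫ w, ‖Function.uncurry Φ (y, w)‖ ∂ν :=
          integral_nonneg fun w => norm_nonneg _
        rw [Real.norm_eq_abs, abs_of_nonneg hnn]
        rcases le_or_gt y 0 with hy | hy
        · have hz : ∀ᵐ w ∂ν, ‖Function.uncurry Φ (y, w)‖ = 0 := by
            filter_upwards [ae_restrict_mem measurableSet_Ioo] with w hw
            have : y ∉ Set.Ioc w 1 := fun hmem => absurd hmem.1 (by linarith [hw.1])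
            show ‖Φ y w‖ = 0
            rw [hΦapp, Set.indicator_of_notMem this]; simp
          calc ∫ w, ‖Function.uncurry Φ (y, w)‖ ∂ν = ∫ _w, (0:ℝ) ∂ν := integral_congr_ae hz
            _ = 0 := integral_zero _ _
            _ ≤ C := hC0
        · set B : ℝ → ℝ := Set.indicator (Set.Iio y) (fun w => (y ^ 2)⁻¹ * (2 * C) * w)
            with hBdef
          have hBmeas : Measurable B :=
            Measurable.indicator (measurable_id.const_mul _) measurableSet_Iio
          have hBint : Integrable B ν := by
            refine (integrable_const ((y ^ 2)⁻¹ * (2 * C))).mono'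
              hBmeas.aestronglyMeasurable ?_
            filter_upwards [ae_restrict_mem measurableSet_Ioo] with w hw
            rw [hBdef, Real.norm_eq_abs]
            by_cases hwy : w ∈ Set.Iio y
            · rw [Set.indicator_of_mem hwy]
              have hco : (0:ℝ) ≤ (y ^ 2)⁻¹ * (2 * C) :=
                mul_nonneg (inv_nonneg.2 (sq_nonneg y)) (by linarith)
              rw [abs_of_nonneg (mul_nonneg hco hw.1.le)]
              nlinarith [hw.1, hw.2]
            · rw [Set.indicator_of_notMem hwy]; simpa using by positivity
          have hle : ∀ᵐ w ∂ν, ‖Function.uncurry Φ (y, w)‖ ≤ B w := by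
            filter_upwards [ae_restrict_mem measurableSet_Ioo] with w hw
            by_cases hwy : w < y
            · have hBw : B w = (y ^ 2)⁻¹ * (2 * C) * w := by
                rw [hBdef]; exact Set.indicator_of_mem (Set.mem_Iio.2 hwy) _
              have h1 : |h w * (2 * w)| ≤ C * (2 * w) := by
                rw [abs_mul, abs_of_nonneg (by linarith [hw.1] : (0:ℝ) ≤ 2 * w)]
                exact mul_le_mul_of_nonneg_right (hC w) (by linarith [hw.1])
              calc ‖Function.uncurry Φ (y, w)‖
                  = |Set.indicator (Set.Ioc w 1) (fun y' => (y' ^ 2)⁻¹) y| * |h w * (2 * w)| := by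
                    show |Φ y w| = _
                    rw [hΦapp, abs_mul]
                _ ≤ (y ^ 2)⁻¹ * (C * (2 * w)) :=
                    mul_le_mul (hIndBound y w) h1 (abs_nonneg _) (by positivity)
                _ = B w := by rw [hBw]; ring
            · have hmem : y ∉ Set.Ioc w 1 := fun hmem => absurd hmem.1 hwy
              have hBw : (0:ℝ) ≤ B w := by
                rw [hBdef]
                by_cases hwy' : w ∈ Set.Iio y
                · exact absurd hwy'.out hwy
                · rw [Set.indicator_of_notMem hwy']
              show ‖Φ y w‖ ≤ B w
              rw [hΦapp, Set.indicator_of_notMem hmem, zero_mul, norm_zero]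
              exact hBw
          have hIoo : Set.Ioo (0:ℝ) 1 ∩ Set.Iio y ⊆ Set.Ioo 0 y :=
            fun w hw => ⟨hw.1.1, hw.2⟩
          have hintOn : IntegrableOn (fun w => (y ^ 2)⁻¹ * (2 * C) * w) (Set.Ioo 0 y) volume := by
            refine (integrable_const ((y ^ 2)⁻¹ * (2 * C) * y)).mono'
              ((measurable_id.const_mul _).aestronglyMeasurable) ?_
            filter_upwards [ae_restrict_mem measurableSet_Ioo] with w hw
            have hco : (0:ℝ) ≤ (y ^ 2)⁻¹ * (2 * C) :=
              mul_nonneg (inv_nonneg.2 (sq_nonneg y)) (by linarith)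
            rw [Real.norm_eq_abs, abs_of_nonneg (mul_nonneg hco hw.1.le)]
            nlinarith [hw.1, hw.2]
          calc ∫ w, ‖Function.uncurry Φ (y, w)‖ ∂ν ≤ ∫ w, B w ∂ν :=
                integral_mono_of_nonneg (Filter.Eventually.of_forall fun w => norm_nonneg _)
                  hBint hle
            _ = ∫ w in Set.Ioo (0:ℝ) 1 ∩ Set.Iio y, (y ^ 2)⁻¹ * (2 * C) * w := by
                rw [hνdef, hBdef, setIntegral_indicator measurableSet_Iio]
            _ ≤ ∫ w in Set.Ioo (0:ℝ) y, (y ^ 2)⁻¹ * (2 * C) * w := by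
                refine setIntegral_mono_set hintOn ?_ (Filter.Eventually.of_forall hIoo)
                filter_upwards [ae_restrict_mem measurableSet_Ioo] with w hw
                have hco : (0:ℝ) ≤ (y ^ 2)⁻¹ * (2 * C) :=
                  mul_nonneg (inv_nonneg.2 (sq_nonneg y)) (by linarith)
                exact mul_nonneg hco hw.1.le
            _ = (y ^ 2)⁻¹ * (2 * C) * ∫ w in Set.Ioo (0:ℝ) y, w := integral_const_mul _ _
            _ = (y ^ 2)⁻¹ * (2 * C) * (y ^ 2 / 2) := by
                rw [← integral_Ioc_eq_integral_Ioo, ← intervalIntegral.integral_of_le hy.le,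
                  integral_id]
                norm_num
            _ = C := by field_simp
    -- a.e. y is in [0,1]
    have hFae : ∀ᵐ y ∂F, y ∈ Set.Icc (0:ℝ) 1 := by
      rw [ae_iff]
      have : {y : ℝ | ¬ y ∈ Set.Icc (0:ℝ) 1} = (Set.Icc (0:ℝ) 1)ᶜ := rfl
      rw [this]; exact hF
    have hInner : ∀ᵐ y ∂F, (∫ u, G (y, u) ∂μU) = ∫ w, Φ y w ∂ν := by
      filter_upwards [hFae] with y hy
      have hdens : (fun u : ℝ => ENNReal.ofReal (2 * u))
          = fun u : ℝ => ((Real.toNNReal (2 * u) : NNReal) : ENNReal) := rfl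
      have hmeas2 : Measurable fun u : ℝ => Real.toNNReal (2 * u) :=
        (measurable_const.mul measurable_id).real_toNNReal
      have hwd : ∫ u, G (y, u) ∂μU
          = ∫ u, (Real.toNNReal (2 * u) : ℝ) • G (y, u) ∂ν := by
        rw [hμUdef, hdens, integral_withDensity_eq_integral_smul hmeas2 _]
        congr 1
      rcases eq_or_lt_of_le hy.1 with hy0 | hy0
      · -- y = 0
        have hL : ∀ u : ℝ, G (y, u) = 0 := by
          intro u
          rw [hGapp]
          apply Set.indicator_of_notMem
          simp [← hy0]
        have hR : ∀ w ∈ Set.Ioo (0:ℝ) 1, Φ y w = 0 := by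
          intro w hw
          rw [hΦapp]
          have : y ∉ Set.Ioc w 1 := fun hmem => absurd hmem.1 (by
            rw [← hy0]; exact not_lt.2 hw.1.le)
          rw [Set.indicator_of_notMem this, zero_mul]
        rw [hwd]
        simp only [hL, smul_zero, integral_zero]
        symm
        rw [hνdef]
        rw [setIntegral_congr_fun measurableSet_Ioo (fun w hw => hR w hw)]
        simp
      · -- 0 < y
        have hyne : y ≠ 0 := ne_of_gt hy0
        have step1 : ∫ u, (Real.toNNReal (2 * u) : ℝ) • G (y, u) ∂ν
            = ∫ u in Set.Ioo (0:ℝ) 1, 2 * u * h (u * y) := by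
          rw [hνdef]
          refine setIntegral_congr_fun measurableSet_Ioo fun u hu => ?_
          have hmem : (y, u) ∈ {q : ℝ × ℝ | 0 < q.2 * q.1} := mul_pos hu.1 hy0
          rw [smul_eq_mul, hGapp, Set.indicator_of_mem hmem,
            Real.coe_toNNReal _ (by linarith [hu.1] : (0:ℝ) ≤ 2 * u)]
        have step2 : ∫ u in Set.Ioo (0:ℝ) 1, 2 * u * h (u * y)
            = (y ^ 2)⁻¹ * ∫ w in Set.Ioo (0:ℝ) y, 2 * w * h w := by
          rw [← integral_Ioc_eq_integral_Ioo, ← intervalIntegral.integral_of_le zero_le_one]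
          have e1 : ∀ u : ℝ, 2 * u * h (u * y) = y⁻¹ * (2 * (u * y) * h (u * y)) := by
            intro u; field_simp
          simp_rw [e1]
          rw [intervalIntegral.integral_const_mul,
            intervalIntegral.integral_comp_mul_right (fun w => 2 * w * h w) hyne]
          simp only [zero_mul, one_mul, smul_eq_mul]
          rw [intervalIntegral.integral_of_le hy0.le, integral_Ioc_eq_integral_Ioo]
          rw [← mul_assoc]
          congr 1
          rw [sq]
          field_simp
        have step3 : ∫ w, Φ y w ∂ν
            = (y ^ 2)⁻¹ * ∫ w in Set.Ioo (0:ℝ) y, 2 * w * h w := by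
          have hΦeq : ∀ w : ℝ, Φ y w
              = Set.indicator (Set.Iio y) (fun w' => (y ^ 2)⁻¹ * (h w' * (2 * w'))) w := by
            intro w
            rw [hΦapp]
            by_cases hwy : w < y
            · have hyIoc : y ∈ Set.Ioc w 1 := Set.mem_Ioc.2 ⟨hwy, hy.2⟩
              rw [Set.indicator_of_mem hyIoc, Set.indicator_of_mem (Set.mem_Iio.2 hwy)]
            · have h1 : y ∉ Set.Ioc w 1 := fun hmem => absurd hmem.1 hwy
              have h2 : w ∉ Set.Iio y := fun hmem => absurd hmem.out hwy
              rw [Set.indicator_of_notMem h1, Set.indicator_of_notMem h2, zero_mul]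
          have hset : Set.Ioo (0:ℝ) 1 ∩ Set.Iio y = Set.Ioo (0:ℝ) y := by
            ext w
            constructor
            · rintro ⟨⟨hw1, _⟩, hw3⟩; exact ⟨hw1, hw3⟩
            · rintro ⟨hw1, hw2⟩; exact ⟨⟨hw1, lt_of_lt_of_le hw2 hy.2⟩, hw2⟩
          simp_rw [hΦeq]
          rw [hνdef, setIntegral_indicator measurableSet_Iio, hset, integral_const_mul]
          congr 1
          refine setIntegral_congr_fun measurableSet_Ioo fun w _ => ?_
          ring
        rw [hwd, step1, step2, step3]
    -- main computation
    have e1 : (fun ω => Set.indicator {ω' | 0 < U ω' * Y ω'}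
        (fun ω' => h (U ω' * Y ω')) ω) = fun ω => G (Y ω, U ω) := by
      funext ω
      rw [hGapp]
      simp only [Set.indicator_apply, Set.mem_setOf_eq]
    calc (∫ ω, Set.indicator {ω' | 0 < U ω' * Y ω'} (fun ω' => h (U ω' * Y ω')) ω ∂ℙ)
        = ∫ ω, G (Y ω, U ω) ∂ℙ := by rw [e1]
      _ = ∫ p, G p ∂(F.prod μU) := by
          rw [← hjoint,
            integral_map (hY.prodMk hU).aemeasurable hGmeas.aestronglyMeasurable]
      _ = ∫ y, ∫ u, G (y, u) ∂μU ∂F := integral_prod G hGint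
      _ = ∫ y, ∫ w, Φ y w ∂ν ∂F := integral_congr_ae hInner
      _ = ∫ w, ∫ y, Φ y w ∂F ∂ν := integral_integral_swap hΦint
      _ = ∫ w in Set.Ioo (0:ℝ) 1, h w * (2 * w * Fplus F w) := by
          rw [hνdef]
          refine integral_congr_ae (Filter.Eventually.of_forall fun w => ?_)
          simp only [hΦapp]
          rw [integral_mul_const, integral_indicator measurableSet_Ioc]
          show (∫ y in Set.Ioc w 1, (y ^ 2)⁻¹ ∂F) * (h w * (2 * w))
            = h w * (2 * w * Fplus F w)
          rw [Fplus]; ring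
end

section
/- Let F be a Borel probability measure on [0,1] and for 2 ≤ k ≤ n define λ_{nk} = ∫_{[0,1]} y^{k−2}(1−y)^{n−k} F(dy). Then for every integer n ≥ 2: Σ_{k=2}^n C(n,k) λ_{nk} = ∫_{[0,1]} [ 1 − (1−y)^n − n y (1−y)^{n−1} ] y^{−2} F(dy) = (1/2) n(n−1) E[ (1−W)^{n−2} ], where the integrand in the middle expression is extended continuously at y = 0 by its limit n(n−1)/2, and C(n,k) is the binomial coefficient. -/
open MeasureTheory Set

/-- Λ-coalescent merger rate `λ_{nk} = ∫ y^{k-2} (1-y)^{n-k} F(dy)`. -/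
noncomputable def lamRate (F : Measure ℝ) (n k : ℕ) : ℝ :=
  ∫ y, y ^ (k - 2) * (1 - y) ^ (n - k) ∂F

lemma choose_two_real (n : ℕ) : (n.choose 2 : ℝ) = n * ((n:ℝ) - 1) / 2 := by
  rcases n with _ | m
  · simp
  · have h : (m+1).choose 2 = (m+1) * m / 2 := by
      rw [Nat.choose_two_right, Nat.add_sub_cancel]
    have hdvd : 2 ∣ (m+1) * m := by
      rw [mul_comm]; exact (Nat.even_mul_succ_self m).two_dvd
    rw [h, Nat.cast_div hdvd (by norm_num)]
    push_cast
    ring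

lemma sum_choose_eq (n : ℕ) (hn : 2 ≤ n) (y : ℝ) :
    ∑ k ∈ Finset.Icc 2 n, (n.choose k : ℝ) * (y ^ (k - 2) * (1 - y) ^ (n - k)) =
    if y = (0:ℝ) then (n : ℝ) * ((n : ℝ) - 1) / 2
      else (1 - (1 - y) ^ n - n * y * (1 - y) ^ (n - 1)) / y ^ 2 := by
  split_ifs with hy
  · subst hy
    rw [Finset.sum_eq_single_of_mem 2 (Finset.mem_Icc.mpr ⟨le_refl 2, hn⟩)]
    · simp [choose_two_real]
    · intro k hk hk2
      have hk' : 2 ≤ k := (Finset.mem_Icc.mp hk).1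
      have : k - 2 ≠ 0 := by omega
      simp [zero_pow this]
  · rw [eq_div_iff (pow_ne_zero 2 hy)]
    have key : (∑ k ∈ Finset.Icc 2 n, (n.choose k : ℝ) * (y ^ (k-2) * (1-y)^(n-k))) * y^2
        = ∑ k ∈ Finset.Icc 2 n, y ^ k * (1-y)^(n-k) * (n.choose k : ℝ) := by
      rw [Finset.sum_mul]
      apply Finset.sum_congr rfl
      intro k hk
      have h2 : 2 ≤ k := (Finset.mem_Icc.mp hk).1
      have hpow : y ^ (k-2) * y ^ 2 = y ^ k := by
        rw [← pow_add]; congr 1; omega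
      calc (n.choose k : ℝ) * (y ^ (k-2) * (1-y)^(n-k)) * y^2
          = (y ^ (k-2) * y ^ 2) * (1-y)^(n-k) * (n.choose k : ℝ) := by ring
        _ = y ^ k * (1-y)^(n-k) * (n.choose k : ℝ) := by rw [hpow]
    rw [key]
    have hbin : (1:ℝ) = ∑ k ∈ Finset.range (n+1), y ^ k * (1-y)^(n-k) * (n.choose k : ℝ) := by
      have := add_pow y (1-y) n
      simp only [add_sub_cancel, one_pow] at this
      simpa using this
    have hsplit : ∑ k ∈ Finset.range (n+1), y ^ k * (1-y)^(n-k) * (n.choose k : ℝ)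
        = (∑ k ∈ Finset.Ico 0 2, y ^ k * (1-y)^(n-k) * (n.choose k : ℝ))
          + ∑ k ∈ Finset.Ico 2 (n+1), y ^ k * (1-y)^(n-k) * (n.choose k : ℝ) := by
      rw [Finset.sum_Ico_consecutive _ (Nat.zero_le 2) (by omega)]
      rw [Finset.range_eq_Ico]
    have hIcc : Finset.Ico 2 (n+1) = Finset.Icc 2 n := by
      rw [Finset.Ico_add_one_right_eq_Icc]
    have hlow : ∑ k ∈ Finset.Ico 0 2, y ^ k * (1-y)^(n-k) * (n.choose k : ℝ)
        = (1-y)^n + y * (1-y)^(n-1) * n := by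
      rw [← Finset.range_eq_Ico, Finset.sum_range_succ, Finset.sum_range_succ]
      simp
    rw [hIcc, hlow] at hsplit
    rw [← hbin] at hsplit
    linarith [hsplit]

lemma inner_integral (n : ℕ) (hn : 2 ≤ n) (y : ℝ) :
    (1/2 : ℝ) * (n:ℝ) * ((n:ℝ)-1) * ∫ u in Set.Ioo (0:ℝ) 1, (1 - u * y) ^ (n - 2) * (2 * u)
    = if y = (0:ℝ) then (n : ℝ) * ((n : ℝ) - 1) / 2
      else (1 - (1 - y) ^ n - n * y * (1 - y) ^ (n - 1)) / y ^ 2 := by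
  have hIoo : (∫ u in Set.Ioo (0:ℝ) 1, (1 - u * y) ^ (n - 2) * (2 * u))
      = ∫ u in (0:ℝ)..1, (1 - u * y) ^ (n - 2) * (2 * u) := by
    rw [intervalIntegral.integral_of_le zero_le_one, integral_Ioc_eq_integral_Ioo]
  have hn0 : (n:ℝ) ≠ 0 := by positivity
  have hn2 : (2:ℝ) ≤ (n:ℝ) := by exact_mod_cast hn
  have hn1 : (n:ℝ) - 1 ≠ 0 := by linarith
  split_ifs with hy
  · subst hy
    simp only [mul_zero, sub_zero, one_pow, one_mul] at hIoo ⊢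
    rw [hIoo, intervalIntegral.integral_const_mul, integral_id]
    norm_num
    ring
  · rw [hIoo]
    set G : ℝ → ℝ := fun u => (2/y^2) * ((1-u*y)^n/(n:ℝ) - (1-u*y)^(n-1)/((n:ℝ)-1)) with hG
    have hderiv : ∀ u ∈ Set.uIcc (0:ℝ) 1,
        HasDerivAt G ((1 - u * y) ^ (n - 2) * (2 * u)) u := by
      intro u _
      have h1 : HasDerivAt (fun u:ℝ => 1 - u*y) (-y) u := by
        simpa using ((hasDerivAt_id u).mul_const y).const_sub 1
      have h2 := (h1.pow n).div_const (n:ℝ)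
      have h3 := (h1.pow (n-1)).div_const ((n:ℝ)-1)
      have h4 := (h2.sub h3).const_mul (2/y^2)
      convert h4 using 1
      case e'_4 => rfl
      case e'_5 => rfl
      case e'_8 => rfl
      have hcast : ((n-1 : ℕ) : ℝ) = (n:ℝ) - 1 := by
        have : 1 ≤ n := by omega
        push_cast [Nat.cast_sub this]
        ring
      have e1 : n - 1 - 1 = n - 2 := by omega
      have e2 : (1 - u*y)^(n-1) = (1-u*y)^(n-2) * (1-u*y) := by
        rw [← pow_succ]; congr 1; omega
      rw [e1, hcast, e2]
      field_simp
      ring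
    have hcont : Continuous (fun u : ℝ => (1 - u * y) ^ (n - 2) * (2 * u)) := by
      fun_prop
    have hFTC := intervalIntegral.integral_eq_sub_of_hasDerivAt hderiv
      (hcont.intervalIntegrable 0 1)
    rw [hFTC]
    have hG1 : G 1 - G 0 = (2/y^2) * ((1-y)^n/(n:ℝ) - (1-y)^(n-1)/((n:ℝ)-1))
        - (2/y^2) * (1/(n:ℝ) - 1/((n:ℝ)-1)) := by
      simp [hG]
    have e2 : (1 - y)^n = (1-y)^(n-1) * (1-y) := by
      rw [← pow_succ]; congr 1; omega
    rw [hG1, e2]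
    field_simp
    ring

lemma integrable_term (F : Measure ℝ) [IsProbabilityMeasure F]
    (hF : F (Set.Icc (0:ℝ) 1)ᶜ = 0) (a b : ℕ) :
    Integrable (fun y : ℝ => y ^ a * (1 - y) ^ b) F := by
  have hmem : ∀ᵐ y ∂F, y ∈ Set.Icc (0:ℝ) 1 := by
    exact MeasureTheory.mem_ae_iff.mpr hF
  apply (integrable_const (1:ℝ)).mono'
  · exact (by fun_prop : Continuous fun y:ℝ => y^a*(1-y)^b).aestronglyMeasurable
  · filter_upwards [hmem] with y hy
    obtain ⟨h0, h1⟩ := hy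
    have hy1 : |y| ≤ 1 := abs_le.mpr ⟨by linarith, h1⟩
    have hy2 : |1 - y| ≤ 1 := abs_le.mpr ⟨by linarith, by linarith⟩
    have hA : |y ^ a| ≤ 1 := by rw [abs_pow]; exact pow_le_one₀ (abs_nonneg _) hy1
    have hB : |(1-y) ^ b| ≤ 1 := by rw [abs_pow]; exact pow_le_one₀ (abs_nonneg _) hy2
    rw [Real.norm_eq_abs, abs_mul]
    nlinarith [abs_nonneg (y^a), abs_nonneg ((1-y)^b)]

/-- the total Λ-coalescent merger rate from `n` blocks equals
`(1/2) n (n-1) E[(1-W)^{n-2}]`, where `W = U⬝Y`, `Y ∼ F`, `U` with density `2u`. -/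
theorem stmt4 (F : Measure ℝ) [IsProbabilityMeasure F]
    (hF : F (Set.Icc (0:ℝ) 1)ᶜ = 0) (n : ℕ) (hn : 2 ≤ n) :
    (∑ k ∈ Finset.Icc 2 n, (n.choose k : ℝ) * lamRate F n k)
      = (∫ y, (if y = (0:ℝ) then (n : ℝ) * ((n : ℝ) - 1) / 2
          else (1 - (1 - y) ^ n - n * y * (1 - y) ^ (n - 1)) / y ^ 2) ∂F) ∧
    (∑ k ∈ Finset.Icc 2 n, (n.choose k : ℝ) * lamRate F n k)
      = (1/2) * (n : ℝ) * ((n : ℝ) - 1) *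
          ∫ y, (∫ u in Set.Ioo (0:ℝ) 1, (1 - u * y) ^ (n - 2) * (2 * u)) ∂F := by
  have hsum : (∑ k ∈ Finset.Icc 2 n, (n.choose k : ℝ) * lamRate F n k)
      = ∫ y, (∑ k ∈ Finset.Icc 2 n, (n.choose k : ℝ) * (y ^ (k-2) * (1-y)^(n-k))) ∂F := by
    rw [integral_finset_sum]
    · apply Finset.sum_congr rfl
      intro k _
      rw [lamRate, ← integral_const_mul]
    · intro k _
      exact (integrable_term F hF _ _).const_mul _
  constructor
  · rw [hsum]
    apply integral_congr_ae (Filter.Eventually.of_forall _)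
    intro y
    exact sum_choose_eq n hn y
  · rw [hsum]
    have h2 : (fun y : ℝ => ∑ k ∈ Finset.Icc 2 n, (n.choose k : ℝ) * (y ^ (k-2) * (1-y)^(n-k)))
        = fun y : ℝ => (1/2 : ℝ) * (n:ℝ) * ((n:ℝ)-1) *
            ∫ u in Set.Ioo (0:ℝ) 1, (1 - u * y) ^ (n - 2) * (2 * u) := by
      funext y
      rw [sum_choose_eq n hn y, ← inner_integral n hn y]
    rw [h2]
    rw [mul_assoc, mul_assoc, integral_const_mul]
    ring
end

section
/- Let F be a Borel probability measure on [0,1] and for 2 ≤ k ≤ n define λ_{nk} = ∫_{[0,1]} y^{k−2}(1−y)^{n−k} F(dy). For integers 2 ≤ k ≤ n: C(n,k) λ_{nk} = (n/2) E[ P_{k−1}(n,W) − P_k(n,W) ], where P_j(n,w) = C(n−1,j) (1−w)^{n−j−1} w^{j−1} for 1 ≤ j ≤ n−1, P_n(n,w) = 0, and the convention w^0 = 1 is used at w = 0. -/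
open MeasureTheory Set

/-- `P_j(n,w) = C(n-1,j) (1-w)^{n-j-1} w^{j-1}` for `j ≤ n-1`, and `P_n(n,w) = 0`. -/
noncomputable def Ppoly (n j : ℕ) (w : ℝ) : ℝ :=
  if j = n then 0 else ((n - 1).choose j : ℝ) * (1 - w) ^ (n - j - 1) * w ^ (j - 1)

lemma ppoly_cont (n j : ℕ) (y : ℝ) : Continuous (fun u : ℝ => Ppoly n j (u * y)) := by
  unfold Ppoly
  by_cases h : j = n
  · simp only [h, if_pos rfl]; exact continuous_const
  · simp only [if_neg h]; fun_prop

lemma inner_eq (n k : ℕ) (hk : 2 ≤ k) (hkn : k ≤ n) (y : ℝ) :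
    (∫ u in Set.Ioo (0:ℝ) 1, (Ppoly n (k - 1) (u * y) - Ppoly n k (u * y)) * (2 * u))
    = 2 * ((n - 1).choose (k - 1) : ℝ) / k * (y ^ (k - 2) * (1 - y) ^ (n - k)) := by
  set c : ℝ := 2 * ((n - 1).choose (k - 1) : ℝ) / k with hc
  set f : ℝ → ℝ := fun u => (Ppoly n (k - 1) (u * y) - Ppoly n k (u * y)) * (2 * u) with hf
  set A : ℝ → ℝ := fun u => c * (u ^ k * (y ^ (k - 2) * (1 - u * y) ^ (n - k))) with hA
  have hderiv : ∀ u : ℝ, HasDerivAt A (f u) u := by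
    intro u
    have hlin : HasDerivAt (fun u : ℝ => 1 - u * y) (-y) u := by
      simpa using ((hasDerivAt_id u).mul_const y).const_sub 1
    have h2 : HasDerivAt (fun u : ℝ => (1 - u * y) ^ (n - k))
        (((n - k : ℕ) : ℝ) * (1 - u * y) ^ (n - k - 1) * (-y)) u := hlin.pow _
    have h1 : HasDerivAt (fun u : ℝ => u ^ k) (((k : ℕ) : ℝ) * u ^ (k - 1)) u :=
      hasDerivAt_pow k u
    have hD := (h1.mul (h2.const_mul (y ^ (k - 2)))).const_mul c
    refine hD.congr_deriv ?_
    symm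
    obtain ⟨a, rfl⟩ : ∃ a, k = a + 2 := ⟨k - 2, by omega⟩
    rcases eq_or_lt_of_le hkn with rfl | hlt
    · simp only [hf, hc, Ppoly, if_pos rfl,
        if_neg (by omega : ¬ a + 1 = a + 2), if_neg (by omega : ¬ a + 2 - 1 = a + 2),
        show a + 2 - 1 = a + 1 from rfl, show a + 2 - 2 = a from rfl,
        show a + 1 - 1 = a from rfl,
        show a + 2 - (a + 2) = 0 from by omega,
        show a + 2 - (a + 1) - 1 = 0 from by omega,
        Nat.choose_self, pow_zero, Nat.cast_zero, Nat.cast_one]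
      have hne : ((a : ℝ) + 2) ≠ 0 := by positivity
      push_cast
      field_simp
      ring
    · obtain ⟨m, rfl⟩ : ∃ m, n = a + 2 + m + 1 := ⟨n - (a + 2) - 1, by omega⟩
      simp only [hf, hc, Ppoly,
        if_neg (by omega : ¬ a + 1 = a + 2 + m + 1),
        if_neg (by omega : ¬ a + 2 - 1 = a + 2 + m + 1),
        if_neg (by omega : ¬ a + 2 = a + 2 + m + 1),
        show a + 2 - 1 = a + 1 from rfl, show a + 2 - 2 = a from rfl,
        show a + 1 - 1 = a from rfl,
        show a + 2 + m + 1 - (a + 2) = m + 1 from by omega,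
        show a + 2 + m + 1 - (a + 1) - 1 = m + 1 from by omega,
        show a + 2 + m + 1 - (a + 2) - 1 = m from by omega,
        show a + 2 + m + 1 - 1 = a + m + 2 from by omega]
      have hC : ((a + m + 2).choose (a + 2) : ℝ) * (a + 2)
          = ((a + m + 2).choose (a + 1) : ℝ) * (m + 1) := by
        have h := Nat.choose_succ_right_eq (a + m + 2) (a + 1)
        have e8 : a + m + 2 - (a + 1) = m + 1 := by omega
        rw [e8] at h
        exact_mod_cast congrArg (Nat.cast : ℕ → ℝ) h
      have hne : ((a : ℝ) + 2) ≠ 0 := by positivity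
      push_cast
      field_simp
      linear_combination (-1 * u ^ (a + 2) * y ^ (a + 1) * (1 - u * y) ^ m) * hC
  have hcont : Continuous f := by
    rw [hf]
    exact (((ppoly_cont n (k - 1) y).sub (ppoly_cont n k y)).mul (by fun_prop))
  have hFTC := intervalIntegral.integral_eq_sub_of_hasDerivAt
      (f := A) (f' := f) (a := 0) (b := 1)
      (fun u _ => hderiv u) (hcont.intervalIntegrable 0 1)
  rw [intervalIntegral.integral_of_le (by norm_num : (0:ℝ) ≤ 1)] at hFTC
  rw [← MeasureTheory.integral_Ioc_eq_integral_Ioo, hFTC, hA]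
  have h0 : (0:ℝ) ^ k = 0 := zero_pow (by omega)
  simp [h0]

theorem stmt5 (F : Measure ℝ) [IsProbabilityMeasure F]
    (hF : F (Set.Icc (0:ℝ) 1)ᶜ = 0) (n k : ℕ) (hk : 2 ≤ k) (hkn : k ≤ n) :
    (n.choose k : ℝ) * lamRate F n k
      = ((n : ℝ) / 2) *
        ∫ y, (∫ u in Set.Ioo (0:ℝ) 1,
          (Ppoly n (k - 1) (u * y) - Ppoly n k (u * y)) * (2 * u)) ∂F := by
  have hre : (∫ y, (∫ u in Set.Ioo (0:ℝ) 1,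
      (Ppoly n (k - 1) (u * y) - Ppoly n k (u * y)) * (2 * u)) ∂F)
      = 2 * ((n - 1).choose (k - 1) : ℝ) / k * lamRate F n k := by
    rw [lamRate, ← MeasureTheory.integral_const_mul]
    exact integral_congr_ae (Filter.Eventually.of_forall fun y => inner_eq n k hk hkn y)
  rw [hre]
  have hid : (n.choose k : ℝ) * k = (n : ℝ) * ((n - 1).choose (k - 1) : ℝ) := by
    have h := Nat.add_one_mul_choose_eq (n - 1) (k - 1)
    have e1 : (n - 1) + 1 = n := by omega
    have e2 : (k - 1) + 1 = k := by omega
    rw [e1, e2] at h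
    exact_mod_cast congrArg (Nat.cast : ℕ → ℝ) h.symm
  have hkne : (k : ℝ) ≠ 0 := by
    have : 0 < k := by omega
    exact_mod_cast this.ne'
  have hck : (n.choose k : ℝ) = (n : ℝ) * ((n - 1).choose (k - 1) : ℝ) / k := by
    rw [eq_div_iff hkne]; exact hid
  rw [hck]
  ring
end

section
/- Let F be a Borel probability measure on [0,1] with F({0}) = 0. Then, as an identity in [0,∞]: (1/2) E[ 1/( W(1−W) ) ] = ∫_{(0,1]} ( −log(1−y) ) y^{−2} F(dy). In particular the critical selection value β* = ∫_{(0,1]} (−log(1−y)) y^{−2} F(dy) satisfies 2β* = E[ 1/(W(1−W)) ]. -/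
open MeasureTheory Set ENNReal

lemma L1 (y t : ℝ) (hy : 0 < y) (ht0 : 0 < t) (hty : t * y < 1) :
    ∫⁻ u in Set.Ioo (0:ℝ) t, ENNReal.ofReal (2 / (y * (1 - u * y)))
      = ENNReal.ofReal (-(2 / y ^ 2) * Real.log (1 - t * y)) := by
  have hden : ∀ u ∈ Set.Icc (0:ℝ) t, 0 < 1 - u * y := by
    intro u hu
    have : u * y ≤ t * y := mul_le_mul_of_nonneg_right hu.2 hy.le
    linarith
  have hcont : ContinuousOn (fun u : ℝ => 2 / (y * (1 - u * y))) (Set.Icc 0 t) := by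
    apply ContinuousOn.div continuousOn_const
    · fun_prop
    · intro u hu
      exact ne_of_gt (mul_pos hy (hden u hu))
  have hint : IntegrableOn (fun u : ℝ => 2 / (y * (1 - u * y))) (Set.Ioo 0 t) := by
    exact (hcont.integrableOn_Icc).mono_set Set.Ioo_subset_Icc_self
  have hnn : 0 ≤ᵐ[volume.restrict (Set.Ioo 0 t)] fun u : ℝ => 2 / (y * (1 - u * y)) := by
    filter_upwards [ae_restrict_mem measurableSet_Ioo] with u hu
    have := hden u ⟨hu.1.le, hu.2.le⟩
    positivity
  rw [← ofReal_integral_eq_lintegral_ofReal hint hnn]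
  congr 1
  have h1 : ∫ u in Set.Ioo (0:ℝ) t, 2 / (y * (1 - u * y))
      = ∫ u in (0:ℝ)..t, 2 / (y * (1 - u * y)) := by
    rw [intervalIntegral.integral_of_le ht0.le, integral_Ioc_eq_integral_Ioo]
  rw [h1]
  have hderiv : ∀ u ∈ Set.uIcc (0:ℝ) t,
      HasDerivAt (fun u : ℝ => -(2 / y ^ 2) * Real.log (1 - u * y))
        (2 / (y * (1 - u * y))) u := by
    intro u hu
    rw [Set.uIcc_of_le ht0.le] at hu
    have hd := hden u hu
    have h2 : HasDerivAt (fun u : ℝ => 1 - u * y) (-y) u := by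
      simpa using ((hasDerivAt_id u).mul_const y).const_sub 1
    have h3 : HasDerivAt (fun u : ℝ => Real.log (1 - u * y)) ((1 - u * y)⁻¹ * (-y)) u :=
      ((Real.hasDerivAt_log hd.ne').comp u h2 :)
    have h4 := h3.const_mul (-(2 / y ^ 2))
    refine h4.congr_deriv ?_
    have hy0 : y ≠ 0 := hy.ne'
    have hd0 : 1 - u * y ≠ 0 := hd.ne'
    field_simp
  have hii : IntervalIntegrable (fun u : ℝ => 2 / (y * (1 - u * y))) volume 0 t := by
    have : ContinuousOn (fun u : ℝ => 2 / (y * (1 - u * y))) (Set.uIcc 0 t) := by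
      rw [Set.uIcc_of_le ht0.le]; exact hcont
    exact this.intervalIntegrable
  rw [intervalIntegral.integral_eq_sub_of_hasDerivAt hderiv hii]
  simp [Real.log_one]

lemma L2 (y : ℝ) (hy : 0 < y) (hy1 : y ≤ 1) :
    (∫⁻ u in Set.Ioo (0:ℝ) 1,
        (ENNReal.ofReal (u * y * (1 - u * y)))⁻¹ * ENNReal.ofReal (2 * u))
      = ∫⁻ u in Set.Ioo (0:ℝ) 1, ENNReal.ofReal (2 / (y * (1 - u * y))) := by
  apply setLIntegral_congr_fun measurableSet_Ioo
  intro u hu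
  beta_reduce
  have h1 : 0 < u * y := mul_pos hu.1 hy
  have h2 : u * y < 1 := lt_of_le_of_lt (by nlinarith [hu.1.le] : u * y ≤ u) hu.2
  have h3 : 0 < u * y * (1 - u * y) := mul_pos h1 (by linarith)
  rw [← ENNReal.ofReal_inv_of_pos h3, ← ENNReal.ofReal_mul (by positivity)]
  congr 1
  have hu0 : u ≠ 0 := ne_of_gt hu.1
  have hy0 : y ≠ 0 := ne_of_gt hy
  have hd : 1 - u * y ≠ 0 := by linarith
  field_simp

/-- with `F({0}) = 0`, as an identity in `[0,∞]`,
`(1/2) E[1/(W(1-W))] = ∫_{(0,1]} (-log(1-y)) y⁻² F(dy)`,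
where `W = U⬝Y`, `Y ∼ F`, `U` with density `2u` on `(0,1)`; the conventions
`1/0 = ∞` and `-log(1-1) = ∞` are used.  In particular the critical selection value
`β* = ∫_{(0,1]} (-log(1-y)) y⁻² F(dy)` satisfies `2β* = E[1/(W(1-W))]`. -/
theorem stmt7 (F : Measure ℝ) [IsProbabilityMeasure F]
    (hF : F (Set.Icc (0:ℝ) 1)ᶜ = 0) (h0 : F {0} = 0) :
    (1 / 2 : ℝ≥0∞) *
      (∫⁻ y, (∫⁻ u in Set.Ioo (0:ℝ) 1,
        (ENNReal.ofReal (u * y * (1 - u * y)))⁻¹ * ENNReal.ofReal (2 * u)) ∂F)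
    = ∫⁻ y in Set.Ioc (0:ℝ) 1,
        (if y = 1 then ⊤ else ENNReal.ofReal (-Real.log (1 - y))) / ENNReal.ofReal (y ^ 2) ∂F := by
  -- restrict to Ioc 0 1
  have hcompl : F (Set.Ioc (0:ℝ) 1)ᶜ = 0 := by
    have hsub : (Set.Ioc (0:ℝ) 1)ᶜ ⊆ (Set.Icc (0:ℝ) 1)ᶜ ∪ {0} := by
      intro x hx
      simp only [Set.mem_compl_iff, Set.mem_Ioc, not_and_or, not_lt, not_le] at hx
      by_cases hmem : x ∈ Set.Icc (0:ℝ) 1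
      · right
        rcases hx with h | h
        · simp only [Set.mem_singleton_iff]; linarith [hmem.1]
        · exact absurd hmem.2 (not_le.mpr h)
      · exact Or.inl hmem
    have := measure_mono hsub (μ := F)
    have h2 := (measure_union_le (μ := F) (Set.Icc (0:ℝ) 1)ᶜ {0})
    rw [hF, h0] at h2
    have h3 : F (Set.Ioc (0:ℝ) 1)ᶜ ≤ 0 := by simpa using this.trans h2
    exact le_antisymm h3 zero_le
  have hres : F.restrict (Set.Ioc (0:ℝ) 1) = F :=
    Measure.restrict_eq_self_of_ae_mem (by
      rw [MeasureTheory.ae_iff]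
      exact hcompl)
  conv_lhs => rw [← hres]
  rw [← lintegral_const_mul' _ _ (by norm_num : (1/2 : ℝ≥0∞) ≠ ⊤)]
  apply setLIntegral_congr_fun measurableSet_Ioc
  intro y hy
  beta_reduce
  have hy0 : 0 < y := hy.1
  have hy1 : y ≤ 1 := hy.2
  rw [L2 y hy0 hy1]
  by_cases hone : y = 1
  · subst hone
    simp only [if_pos rfl]
    have htop : (∫⁻ u in Set.Ioo (0:ℝ) 1, ENNReal.ofReal (2 / (1 * (1 - u * 1)))) = ⊤ := by
      by_contra hne
      set I := ∫⁻ u in Set.Ioo (0:ℝ) 1, ENNReal.ofReal (2 / (1 * (1 - u * 1))) with hI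
      have hM : 0 ≤ I.toReal := ENNReal.toReal_nonneg
      set M := I.toReal with hMdef
      set t : ℝ := 1 - Real.exp (-(M + 1) / 2) with htdef
      have hexp : Real.exp (-(M + 1) / 2) < 1 := by
        rw [Real.exp_lt_one_iff]; linarith
      have ht0 : 0 < t := by rw [htdef]; linarith
      have ht1 : t < 1 := by
        have := Real.exp_pos (-(M + 1) / 2); rw [htdef]; linarith
      have hle : ENNReal.ofReal (-(2 / (1:ℝ) ^ 2) * Real.log (1 - t * 1)) ≤ I := by
        rw [← L1 1 t one_pos ht0 (by simpa using ht1)]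
        exact lintegral_mono_set (Set.Ioo_subset_Ioo le_rfl ht1.le)
      have hval : -(2 / (1:ℝ) ^ 2) * Real.log (1 - t * 1) = M + 1 := by
        simp [htdef, Real.log_exp]
        ring
      rw [hval] at hle
      have : I = ENNReal.ofReal M := by
        rw [hMdef, ENNReal.ofReal_toReal hne]
      rw [this] at hle
      have := (ENNReal.ofReal_le_ofReal_iff (by linarith)).mp hle
      linarith
    rw [htop]
    simp
  · have hylt : y < 1 := lt_of_le_of_ne hy1 hone
    rw [if_neg hone, L1 y 1 hy0 one_pos (by linarith)]
    have h2 : (1/2 : ℝ≥0∞) = ENNReal.ofReal (1/2) := by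
      rw [ENNReal.ofReal_div_of_pos two_pos]
      norm_num
    rw [h2, ← ENNReal.ofReal_mul (by norm_num),
        ← ENNReal.ofReal_div_of_pos (by positivity : (0:ℝ) < y ^ 2)]
    congr 1
    have hy0' : y ≠ 0 := ne_of_gt hy0
    field_simp
end

section
/- Let F be a Borel probability measure on [0,1] and suppose E[(1−W)^j] > 0 for all j ≥ 1. Define, for a polynomial h and w ∈ [0,1], x ∈ [0,1], the operator D_w h(x) = ( h(x(1−w)+w) − h(x(1−w)) )/w for w > 0 and D_0 h(x) = h'(x). Then for every choice of real constants (c_n)_{n≥1} there exists a unique sequence of polynomials (h_n)_{n≥0} with h_0 = 1, h_n of degree n with constant term h_n(0) = c_n and leading coefficient 1/∏_{j=1}^{n−1} E[(1−W)^j], such that for all n ≥ 1 and all x ∈ [0,1]: E[ D_W h_n(x) ] = n · h_{n−1}(x). -/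
open MeasureTheory Set Polynomial

/-- The operator `D_w h(x) = (h(x(1-w)+w) - h(x(1-w)))/w` for `w > 0`, `D_0 h(x) = h'(x)`. -/
noncomputable def Dop (w : ℝ) (h : Polynomial ℝ) (x : ℝ) : ℝ :=
  if w = 0 then Polynomial.eval x (Polynomial.derivative h)
  else (Polynomial.eval (x * (1 - w) + w) h - Polynomial.eval (x * (1 - w)) h) / w

/-- `E[D_W h(x)]` where `W = U⬝Y`, `Y ∼ F`, `U` with density `2u` on `(0,1)`. -/
noncomputable def expD (F : Measure ℝ) (h : Polynomial ℝ) (x : ℝ) : ℝ :=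
  ∫ y, (∫ u in Set.Ioo (0:ℝ) 1, Dop (u * y) h x * (2 * u)) ∂F

/-- `E[(1-W)^j]` where `W = U⬝Y`. -/
noncomputable def expMom (F : Measure ℝ) (j : ℕ) : ℝ :=
  ∫ y, (∫ u in Set.Ioo (0:ℝ) 1, (1 - u * y) ^ j * (2 * u)) ∂F

noncomputable def Mo (F : Measure ℝ) (i j : ℕ) : ℝ :=
  ∫ y, (∫ u in Set.Ioo (0:ℝ) 1, (1 - u * y) ^ i * (u * y) ^ j * (2 * u)) ∂F

noncomputable def tc (F : Measure ℝ) (k i : ℕ) : ℝ := (k.choose i : ℝ) * Mo F i (k - 1 - i)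

noncomputable def Tmon (F : Measure ℝ) (k : ℕ) : Polynomial ℝ :=
  ∑ i ∈ Finset.range k, C (tc F k i) * X ^ i

noncomputable def TopF (F : Measure ℝ) (p : Polynomial ℝ) : Polynomial ℝ :=
  p.sum fun k a => C a * Tmon F k

lemma Mo_zero (F : Measure ℝ) (i : ℕ) : Mo F i 0 = expMom F i := by
  simp only [Mo, expMom, pow_zero, mul_one]

lemma tc_top (F : Measure ℝ) {k : ℕ} (hk : 1 ≤ k) :
    tc F k (k - 1) = k * expMom F (k - 1) := by
  have hc : k.choose (k - 1) = k := by rw [Nat.choose_symm hk, Nat.choose_one_right]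
  rw [tc, Nat.sub_self, Mo_zero, hc]

lemma coeff_Tmon (F : Measure ℝ) (k m : ℕ) :
    (Tmon F k).coeff m = if m < k then tc F k m else 0 := by
  rw [Tmon, Polynomial.finset_sum_coeff]
  simp only [Polynomial.coeff_C_mul, Polynomial.coeff_X_pow, mul_ite, mul_one, mul_zero]
  rw [Finset.sum_ite_eq (Finset.range k) m (fun i => tc F k i)]
  simp [Finset.mem_range]

lemma Top_add (F : Measure ℝ) (p q : Polynomial ℝ) :
    TopF F (p + q) = TopF F p + TopF F q := by
  apply Polynomial.sum_add_index p q _ (fun i => by simp) (fun i b1 b2 => by rw [C_add, add_mul])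

lemma Top_zero (F : Measure ℝ) : TopF F 0 = 0 := Polynomial.sum_zero_index _

lemma Top_sub (F : Measure ℝ) (p q : Polynomial ℝ) :
    TopF F (p - q) = TopF F p - TopF F q := by
  have h := Top_add F (p - q) q
  rw [sub_add_cancel] at h
  rw [h]; ring

lemma Top_monomial (F : Measure ℝ) (k : ℕ) (a : ℝ) :
    TopF F (monomial k a) = C a * Tmon F k :=
  Polynomial.sum_monomial_index a _ (by simp)

lemma Top_C (F : Measure ℝ) (a : ℝ) : TopF F (C a) = 0 := by
  rw [← Polynomial.monomial_zero_left, Top_monomial, Tmon]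
  simp

lemma coeff_Top (F : Measure ℝ) (p : Polynomial ℝ) {d : ℕ} (hd : p.natDegree < d) (m : ℕ) :
    (TopF F p).coeff m
      = ∑ k ∈ Finset.range d, p.coeff k * (if m < k then tc F k m else 0) := by
  rw [TopF, Polynomial.sum_over_range' p (by simp) d hd, Polynomial.finset_sum_coeff]
  refine Finset.sum_congr rfl fun k _ => ?_
  rw [Polynomial.coeff_C_mul, coeff_Tmon]

lemma coeff_Top_top (F : Measure ℝ) {p : Polynomial ℝ} {N : ℕ} (hN : p.natDegree ≤ N)
    (h1 : 1 ≤ N) : (TopF F p).coeff (N - 1) = p.coeff N * tc F N (N - 1) := by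
  rw [coeff_Top F p (lt_of_le_of_lt hN (lt_add_one N))]
  rw [Finset.sum_eq_single N]
  · rw [if_pos (by omega)]
  · intro k hk hkN
    rw [Finset.mem_range] at hk
    rw [if_neg (by omega), mul_zero]
  · intro h; exact absurd (Finset.self_mem_range_succ N) h

lemma TopF_inj (F : Measure ℝ) (hpos0 : ∀ j : ℕ, 0 < expMom F j) {p : Polynomial ℝ}
    (h0 : p.coeff 0 = 0) (hT : TopF F p = 0) : p = 0 := by
  by_contra hp
  have hN1 : 1 ≤ p.natDegree := by
    rcases Nat.eq_zero_or_pos p.natDegree with h | h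
    · exact absurd (by rw [Polynomial.eq_C_of_natDegree_eq_zero h, h0, map_zero]) hp
    · exact h
  have hco := coeff_Top_top F (le_refl p.natDegree) hN1
  rw [hT, Polynomial.coeff_zero] at hco
  have h1 : p.coeff p.natDegree ≠ 0 := Polynomial.leadingCoeff_ne_zero.mpr hp
  have h2 : tc F p.natDegree (p.natDegree - 1) ≠ 0 := by
    rw [tc_top F hN1]
    exact ne_of_gt (mul_pos (by exact_mod_cast hN1) (hpos0 _))
  exact h2 (by
    rcases mul_eq_zero.mp hco.symm with h | h
    · exact absurd h h1
    · exact h)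

lemma TopF_surj (F : Measure ℝ) (hpos0 : ∀ j : ℕ, 0 < expMom F j) :
    ∀ d : ℕ, ∀ g : Polynomial ℝ, (∀ k, d ≤ k → g.coeff k = 0) → ∃ p, TopF F p = g := by
  intro d
  induction d with
  | zero =>
    intro g hg
    exact ⟨0, by rw [Top_zero]; exact (Polynomial.ext fun k => (hg k (Nat.zero_le k)).symm ▸ rfl).symm⟩
  | succ d ih =>
    intro g hg
    have htc : tc F (d + 1) d ≠ 0 := by
      have := tc_top F (k := d + 1) (by omega)
      simp only [Nat.add_sub_cancel] at this
      rw [this]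
      exact ne_of_gt (mul_pos (by positivity) (hpos0 _))
    set α := g.coeff d / tc F (d + 1) d with hα
    obtain ⟨p', hp'⟩ := ih (g - C α * Tmon F (d + 1)) (by
      intro k hk
      rw [Polynomial.coeff_sub, Polynomial.coeff_C_mul, coeff_Tmon]
      rcases eq_or_lt_of_le hk with h | h
      · rw [if_pos (by omega), ← h, hα, div_mul_cancel₀ _ htc, sub_self]
      · rw [hg k (by omega), if_neg (by omega), mul_zero, sub_zero])
    refine ⟨p' + C α * X ^ (d + 1), ?_⟩
    rw [Top_add, hp', Polynomial.C_mul_X_pow_eq_monomial, Top_monomial]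
    ring

lemma key_step (F : Measure ℝ) (hpos0 : ∀ j : ℕ, 0 < expMom F j) (n : ℕ) (hn : 1 ≤ n)
    (q : Polynomial ℝ) (hdeg : q.natDegree ≤ n - 1) (hlead : q.coeff (n - 1) ≠ 0)
    (c' β : ℝ) (hβ : β * tc F n (n - 1) = n * q.coeff (n - 1)) :
    ∃! p : Polynomial ℝ, p.natDegree = n ∧ p.coeff 0 = c' ∧ p.coeff n = β ∧
      TopF F p = C (n : ℝ) * q := by
  have htcn : tc F n (n - 1) ≠ 0 := by
    rw [tc_top F hn]
    exact ne_of_gt (mul_pos (by exact_mod_cast hn) (hpos0 _))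
  have hβ0 : β ≠ 0 := by
    intro h
    rw [h, zero_mul] at hβ
    have hn' : (n : ℝ) ≠ 0 := by exact_mod_cast (by omega : n ≠ 0)
    rcases mul_eq_zero.mp hβ.symm with h | h
    · exact hn' h
    · exact hlead h
  have hgz : ∀ k, n ≤ k → (C (n : ℝ) * q).coeff k = 0 := by
    intro k hk
    rw [Polynomial.coeff_C_mul, Polynomial.coeff_eq_zero_of_natDegree_lt (by omega), mul_zero]
  obtain ⟨p₀, hp₀⟩ := TopF_surj F hpos0 n (C (n : ℝ) * q) hgz
  set p := p₀ - C (p₀.coeff 0) + C c' with hp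
  have hTp : TopF F p = C (n : ℝ) * q := by
    rw [hp, Top_add, Top_sub, Top_C, Top_C, hp₀]; ring
  have hc0 : p.coeff 0 = c' := by
    rw [hp, Polynomial.coeff_add, Polynomial.coeff_sub, Polynomial.coeff_C_zero,
      Polynomial.coeff_C_zero]
    ring
  -- degree bound
  have hdegp : p.natDegree ≤ n := by
    by_contra hcon
    push_neg at hcon
    have hN1 : 1 ≤ p.natDegree := by omega
    have hco := coeff_Top_top F (le_refl p.natDegree) hN1
    rw [hTp] at hco
    have hzero : (C (n : ℝ) * q).coeff (p.natDegree - 1) = 0 := by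
      rw [Polynomial.coeff_C_mul, Polynomial.coeff_eq_zero_of_natDegree_lt (by omega), mul_zero]
    rw [hzero] at hco
    have h1 : p.coeff p.natDegree ≠ 0 := Polynomial.leadingCoeff_ne_zero.mpr (by
      intro h; rw [h] at hN1; simp at hN1)
    have h2 : tc F p.natDegree (p.natDegree - 1) ≠ 0 := by
      rw [tc_top F hN1]
      exact ne_of_gt (mul_pos (by exact_mod_cast hN1) (hpos0 _))
    rcases mul_eq_zero.mp hco.symm with h | h
    · exact h1 h
    · exact h2 h
  -- top coefficient
  have hcn : p.coeff n = β := by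
    have hco := coeff_Top_top F hdegp hn
    rw [hTp] at hco
    have : (C (n : ℝ) * q).coeff (n - 1) = β * tc F n (n - 1) := by
      rw [Polynomial.coeff_C_mul, hβ]
    rw [this] at hco
    exact mul_right_cancel₀ htcn hco.symm
  have hdegn : p.natDegree = n :=
    le_antisymm hdegp (Polynomial.le_natDegree_of_ne_zero (hcn ▸ hβ0))
  refine ⟨p, ⟨hdegn, hc0, hcn, hTp⟩, ?_⟩
  intro p' ⟨hd', h0', hn', hT'⟩
  have hsub : p' - p = 0 := by
    apply TopF_inj F hpos0
    · rw [Polynomial.coeff_sub, h0', hc0, sub_self]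
    · rw [Top_sub, hT', hTp, sub_self]
  exact sub_eq_zero.mp hsub

lemma Dop_eq (p : Polynomial ℝ) (w x : ℝ) :
    Dop w p x = ∑ k ∈ Finset.range (p.natDegree + 1), p.coeff k *
      ∑ i ∈ Finset.range k, (k.choose i : ℝ) * ((x * (1 - w)) ^ i * w ^ (k - 1 - i)) := by
  rcases eq_or_ne w 0 with h | h
  · subst h
    rw [Dop, if_pos rfl]
    have hin : ∀ k : ℕ, (∑ i ∈ Finset.range k,
        (k.choose i : ℝ) * ((x * (1 - 0)) ^ i * (0:ℝ) ^ (k - 1 - i))) = k * x ^ (k - 1) := by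
      intro k
      rcases Nat.eq_zero_or_pos k with hk | hk
      · subst hk; simp
      · rw [Finset.sum_eq_single (k - 1)]
        · have hc : k.choose (k - 1) = k := by rw [Nat.choose_symm hk, Nat.choose_one_right]
          rw [hc, Nat.sub_self, pow_zero]
          ring
        · intro i hi hne
          rw [Finset.mem_range] at hi
          rw [zero_pow (by omega : k - 1 - i ≠ 0)]
          ring
        · intro hmem
          exact absurd (Finset.mem_range.mpr (by omega)) hmem
    simp only [hin]
    rw [Polynomial.eval_eq_sum_range' (n := p.natDegree + 1)
      (lt_of_le_of_lt (Polynomial.natDegree_derivative_le p) (by omega))]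
    rw [Finset.sum_range_succ' (fun k => p.coeff k * ((k : ℝ) * x ^ (k - 1)))]
    rw [Finset.sum_range_succ]
    rw [Polynomial.coeff_derivative,
      Polynomial.coeff_eq_zero_of_natDegree_lt (lt_add_one p.natDegree), zero_mul]
    simp only [Nat.cast_zero, zero_mul, mul_zero, add_zero, zero_add]
    refine Finset.sum_congr rfl fun i _ => ?_
    rw [Polynomial.coeff_derivative]
    push_cast
    ring_nf
  · rw [Dop, if_neg h]
    rw [Polynomial.eval_eq_sum_range, Polynomial.eval_eq_sum_range]
    rw [← Finset.sum_sub_distrib, Finset.sum_div]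
    refine Finset.sum_congr rfl fun k _ => ?_
    rw [← mul_sub, mul_div_assoc]
    congr 1
    have hbin : (x * (1 - w) + w) ^ k = (∑ i ∈ Finset.range k,
        (x * (1 - w)) ^ i * w ^ (k - i) * (k.choose i : ℝ)) + (x * (1 - w)) ^ k := by
      rw [add_pow, Finset.sum_range_succ]
      simp
    rw [hbin, add_sub_cancel_right, Finset.sum_div]
    refine Finset.sum_congr rfl fun i hi => ?_
    rw [Finset.mem_range] at hi
    have hw : w ^ (k - i) = w ^ (k - 1 - i) * w := by
      rw [← pow_succ]
      congr 1
      omega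
    rw [hw]
    field_simp

lemma integrable_inner (i j : ℕ) (y c : ℝ) :
    IntegrableOn (fun u : ℝ => c * ((1 - u * y) ^ i * (u * y) ^ j * (2 * u)))
      (Set.Ioo 0 1) := by
  exact (Continuous.integrableOn_Icc (by fun_prop)).mono_set Set.Ioo_subset_Icc_self

lemma inner_eq_s9 (p : Polynomial ℝ) (x y : ℝ) :
    (∫ u in Set.Ioo (0:ℝ) 1, Dop (u * y) p x * (2 * u)) =
    ∑ k ∈ Finset.range (p.natDegree + 1), ∑ i ∈ Finset.range k,
      (p.coeff k * (k.choose i : ℝ) * x ^ i) *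
        (∫ u in Set.Ioo (0:ℝ) 1, (1 - u * y) ^ i * (u * y) ^ (k - 1 - i) * (2 * u)) := by
  have hpt : ∀ u : ℝ, Dop (u * y) p x * (2 * u) =
      ∑ k ∈ Finset.range (p.natDegree + 1), ∑ i ∈ Finset.range k,
        (p.coeff k * (k.choose i : ℝ) * x ^ i) *
          ((1 - u * y) ^ i * (u * y) ^ (k - 1 - i) * (2 * u)) := by
    intro u
    rw [Dop_eq, Finset.sum_mul]
    refine Finset.sum_congr rfl fun k _ => ?_
    rw [Finset.mul_sum, Finset.sum_mul]
    refine Finset.sum_congr rfl fun i _ => ?_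
    rw [mul_pow x (1 - u * y) i]
    ring
  simp only [hpt]
  rw [MeasureTheory.integral_finset_sum _
    (fun k _ => integrable_finset_sum _ (fun i _ => integrable_inner i (k - 1 - i) y _))]
  refine Finset.sum_congr rfl fun k _ => ?_
  rw [MeasureTheory.integral_finset_sum _ (fun i _ => integrable_inner i (k - 1 - i) y _)]
  refine Finset.sum_congr rfl fun i _ => ?_
  rw [MeasureTheory.integral_const_mul]

lemma integral_upow (m : ℕ) : (∫ u in Set.Ioo (0:ℝ) 1, u ^ m) = 1 / (m + 1) := by
  rw [← MeasureTheory.integral_Ioc_eq_integral_Ioo,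
    ← intervalIntegral.integral_of_le zero_le_one, integral_pow]
  norm_num

lemma g_form (i j : ℕ) (y : ℝ) :
    (∫ u in Set.Ioo (0:ℝ) 1, (1 - u * y) ^ i * (u * y) ^ j * (2 * u)) =
    ∑ a ∈ Finset.range (i + 1),
      ((i.choose a : ℝ) * (-1) ^ a * (2 / (a + j + 2))) * y ^ (a + j) := by
  have h1 : ∀ u : ℝ, (1 - u * y) ^ i * (u * y) ^ j * (2 * u) =
      ∑ a ∈ Finset.range (i + 1),
        ((i.choose a : ℝ) * (-1) ^ a * y ^ (a + j) * 2) * u ^ (a + j + 1) := by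
    intro u
    have hb : (1 - u * y) ^ i
        = ∑ a ∈ Finset.range (i + 1), (-(u * y)) ^ a * 1 ^ (i - a) * (i.choose a : ℝ) := by
      rw [← add_pow]
      ring_nf
    rw [hb, Finset.sum_mul, Finset.sum_mul]
    refine Finset.sum_congr rfl fun a _ => ?_
    rw [neg_pow, mul_pow u y a]
    ring
  simp only [h1]
  rw [MeasureTheory.integral_finset_sum _ (fun a _ =>
    ((Continuous.integrableOn_Icc (by fun_prop)).mono_set Set.Ioo_subset_Icc_self))]
  refine Finset.sum_congr rfl fun a _ => ?_
  rw [MeasureTheory.integral_const_mul, integral_upow]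
  push_cast
  field_simp
  ring

lemma integrable_pow_F (F : Measure ℝ) [IsFiniteMeasure F]
    (hF : F (Set.Icc (0:ℝ) 1)ᶜ = 0) (m : ℕ) : Integrable (fun y : ℝ => y ^ m) F := by
  refine MeasureTheory.Integrable.mono' (integrable_const 1)
    ((continuous_pow m).aestronglyMeasurable) ?_
  rw [MeasureTheory.ae_iff]
  refine measure_mono_null ?_ hF
  intro y hy hmem
  rw [Set.mem_setOf_eq] at hy
  refine hy ?_
  rw [Real.norm_eq_abs, abs_pow]
  exact pow_le_one₀ (abs_nonneg y) (abs_le.mpr ⟨by linarith [hmem.1], hmem.2⟩)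

lemma integrable_g (F : Measure ℝ) [IsFiniteMeasure F]
    (hF : F (Set.Icc (0:ℝ) 1)ᶜ = 0) (i j : ℕ) :
    Integrable (fun y : ℝ => ∫ u in Set.Ioo (0:ℝ) 1,
      (1 - u * y) ^ i * (u * y) ^ j * (2 * u)) F := by
  have h : (fun y : ℝ => ∫ u in Set.Ioo (0:ℝ) 1, (1 - u * y) ^ i * (u * y) ^ j * (2 * u)) =
      fun y => ∑ a ∈ Finset.range (i + 1),
        ((i.choose a : ℝ) * (-1) ^ a * (2 / (a + j + 2))) * y ^ (a + j) :=
    funext fun y => g_form i j y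
  rw [h]
  exact integrable_finset_sum _ (fun a _ => ((integrable_pow_F F hF (a + j)).const_mul _))

lemma eval_TopF (F : Measure ℝ) (p : Polynomial ℝ) (x : ℝ) :
    Polynomial.eval x (TopF F p) = ∑ k ∈ Finset.range (p.natDegree + 1),
      p.coeff k * ∑ i ∈ Finset.range k, tc F k i * x ^ i := by
  rw [TopF, Polynomial.sum_over_range' p (by simp) _ (lt_add_one _),
    Polynomial.eval_finset_sum]
  refine Finset.sum_congr rfl fun k _ => ?_
  rw [Polynomial.eval_mul, Polynomial.eval_C, Tmon, Polynomial.eval_finset_sum]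
  simp

lemma expD_eq (F : Measure ℝ) [IsFiniteMeasure F] (hF : F (Set.Icc (0:ℝ) 1)ᶜ = 0)
    (p : Polynomial ℝ) (x : ℝ) : expD F p x = Polynomial.eval x (TopF F p) := by
  rw [expD]
  simp only [inner_eq_s9 p x]
  rw [MeasureTheory.integral_finset_sum _ (fun k _ => integrable_finset_sum _
    (fun i _ => (integrable_g F hF i (k - 1 - i)).const_mul _))]
  rw [eval_TopF]
  refine Finset.sum_congr rfl fun k _ => ?_
  rw [MeasureTheory.integral_finset_sum _
    (fun i _ => (integrable_g F hF i (k - 1 - i)).const_mul _), Finset.mul_sum]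
  refine Finset.sum_congr rfl fun i _ => ?_
  rw [MeasureTheory.integral_const_mul, tc, Mo]
  ring

lemma expMom_zero (F : Measure ℝ) [IsProbabilityMeasure F] : expMom F 0 = 1 := by
  rw [expMom]
  have h1 : ∀ y : ℝ, (∫ u in Set.Ioo (0:ℝ) 1, (1 - u * y) ^ 0 * (2 * u)) = 1 := by
    intro y
    simp only [pow_zero, one_mul]
    have h2 : (fun u : ℝ => 2 * u) = fun u : ℝ => 2 * u ^ 1 := by funext u; rw [pow_one]
    rw [h2, MeasureTheory.integral_const_mul, integral_upow]
    norm_num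
  simp only [h1]
  simp

lemma cond_iff (F : Measure ℝ) [IsProbabilityMeasure F] (hF : F (Set.Icc (0:ℝ) 1)ᶜ = 0)
    (p q : Polynomial ℝ) (n : ℕ) :
    (∀ x ∈ Set.Icc (0:ℝ) 1, expD F p x = n * Polynomial.eval x q) ↔
      TopF F p = C (n : ℝ) * q := by
  constructor
  · intro h
    apply Polynomial.eq_of_infinite_eval_eq
    apply Set.Infinite.mono (s := Set.Icc (0:ℝ) 1) ?_ (Set.Icc_infinite (by norm_num))
    intro x hx
    rw [Set.mem_setOf_eq, ← expD_eq F hF, h x hx, Polynomial.eval_mul, Polynomial.eval_C]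
  · intro h x hx
    rw [expD_eq F hF, h, Polynomial.eval_mul, Polynomial.eval_C]

noncomputable def seqAux (next : ℕ → Polynomial ℝ → Polynomial ℝ) : ℕ → Polynomial ℝ
  | 0 => 1
  | n + 1 => next n (seqAux next n)

/-- assuming `E[(1-W)^j] > 0` for all `j ≥ 1`, for every choice of constants
`(c_n)` there is a unique sequence of polynomials `(h_n)` with `h_0 = 1`, `h_n` of degree `n`,
constant term `c_n`, leading coefficient `1/∏_{j=1}^{n-1} E[(1-W)^j]`, such that
`E[D_W h_n(x)] = n h_{n-1}(x)` for all `n ≥ 1` and all `x ∈ [0,1]`. -/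
theorem stmt9 (F : Measure ℝ) [IsProbabilityMeasure F]
    (hF : F (Set.Icc (0:ℝ) 1)ᶜ = 0)
    (hpos : ∀ j : ℕ, 1 ≤ j → 0 < expMom F j) :
    ∀ c : ℕ → ℝ, ∃! h : ℕ → Polynomial ℝ,
      h 0 = 1 ∧
      ∀ n : ℕ, 1 ≤ n →
        (h n).natDegree = n ∧
        (h n).coeff 0 = c n ∧
        (h n).leadingCoeff = (∏ j ∈ Finset.Icc 1 (n - 1), expMom F j)⁻¹ ∧
        ∀ x ∈ Set.Icc (0:ℝ) 1, expD F (h n) x = n * Polynomial.eval x (h (n - 1)) := by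
  intro c
  classical
  have hpos0 : ∀ j : ℕ, 0 < expMom F j := by
    intro j
    rcases Nat.eq_zero_or_pos j with h | h
    · rw [h, expMom_zero F]; norm_num
    · exact hpos j h
  set B : ℕ → ℝ := fun n => (∏ j ∈ Finset.Icc 1 (n - 1), expMom F j)⁻¹ with hB
  have hBpos : ∀ n, 0 < B n := fun n =>
    inv_pos.mpr (Finset.prod_pos fun j _ => hpos0 j)
  have hB0 : B 0 = 1 := by
    show (∏ j ∈ Finset.Icc 1 (0 - 1), expMom F j)⁻¹ = 1
    rw [Finset.Icc_eq_empty (by norm_num), Finset.prod_empty, inv_one]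
  have hBrec : ∀ n : ℕ, 1 ≤ n → B n * tc F n (n - 1) = n * B (n - 1) := by
    intro n hn
    rw [tc_top F hn]
    have key : B n * expMom F (n - 1) = B (n - 1) := by
      rcases Nat.lt_or_ge n 2 with h | h
      · have hn1 : n = 1 := by omega
        subst hn1
        show B 1 * expMom F 0 = B 0
        have hB1 : B 1 = 1 := by
          show (∏ j ∈ Finset.Icc 1 (1 - 1), expMom F j)⁻¹ = 1
          rw [Finset.Icc_eq_empty (by norm_num), Finset.prod_empty, inv_one]
        rw [hB1, expMom_zero F]; norm_num
      · obtain ⟨m, rfl⟩ : ∃ m, n = m + 2 := ⟨n - 2, by omega⟩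
        show B (m + 2) * expMom F (m + 1) = B (m + 1)
        show (∏ j ∈ Finset.Icc 1 (m + 2 - 1), expMom F j)⁻¹ * expMom F (m + 1)
          = (∏ j ∈ Finset.Icc 1 (m + 1 - 1), expMom F j)⁻¹
        have he : expMom F (m + 1) ≠ 0 := ne_of_gt (hpos0 _)
        have hprodne : (∏ j ∈ Finset.Icc 1 m, expMom F j) ≠ 0 :=
          ne_of_gt (Finset.prod_pos fun j _ => hpos0 j)
        rw [show m + 2 - 1 = m + 1 from rfl, show m + 1 - 1 = m from rfl,
          Finset.prod_Icc_succ_top (by omega : 1 ≤ m + 1), mul_inv]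
        field_simp
    calc B n * ((n : ℝ) * expMom F (n - 1)) = (n : ℝ) * (B n * expMom F (n - 1)) := by ring
    _ = n * B (n - 1) := by rw [key]
  have key : ∀ n : ℕ, 1 ≤ n → ∀ q : Polynomial ℝ, q.natDegree ≤ n - 1 → q.coeff (n - 1) = B (n - 1) →
      ∃! p : Polynomial ℝ, p.natDegree = n ∧ p.coeff 0 = c n ∧ p.coeff n = B n ∧
        TopF F p = C (n : ℝ) * q := by
    intro n hn q h1 h2
    refine key_step F hpos0 n hn q h1 ?_ (c n) (B n) ?_
    · rw [h2]; exact ne_of_gt (hBpos (n - 1))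
    · rw [h2]; exact hBrec n hn
  have exnext : ∀ n : ℕ, ∀ q : Polynomial ℝ, q.natDegree ≤ n → q.coeff n = B n →
      ∃ p : Polynomial ℝ, p.natDegree = n + 1 ∧ p.coeff 0 = c (n + 1) ∧
        p.coeff (n + 1) = B (n + 1) ∧ TopF F p = C ((n + 1 : ℕ) : ℝ) * q := by
    intro n q h1 h2
    exact (key (n + 1) (by omega) q h1 h2).exists
  obtain ⟨next, hnext⟩ : ∃ next : ℕ → Polynomial ℝ → Polynomial ℝ,
      ∀ n q, q.natDegree ≤ n → q.coeff n = B n →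
        (next n q).natDegree = n + 1 ∧ (next n q).coeff 0 = c (n + 1) ∧
        (next n q).coeff (n + 1) = B (n + 1) ∧ TopF F (next n q) = C ((n + 1 : ℕ) : ℝ) * q := by
    choose f hf using exnext
    refine ⟨fun n q => if hp : q.natDegree ≤ n ∧ q.coeff n = B n then f n q hp.1 hp.2 else 0, ?_⟩
    intro n q h1 h2
    have hp : q.natDegree ≤ n ∧ q.coeff n = B n := ⟨h1, h2⟩
    simp only [dif_pos hp]
    exact hf n q hp.1 hp.2
  set h : ℕ → Polynomial ℝ := seqAux next with hdef
  have h0 : h 0 = 1 := rfl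
  have hsucc : ∀ n, h (n + 1) = next n (h n) := fun n => rfl
  have hinv : ∀ n, (h n).natDegree ≤ n ∧ (h n).coeff n = B n := by
    intro n
    induction n with
    | zero =>
      constructor
      · rw [h0]; simp
      · rw [h0, hB0]; simp
    | succ m ih =>
      have hs := hnext m (h m) ih.1 ih.2
      rw [← hsucc m] at hs
      exact ⟨le_of_eq hs.1, hs.2.2.1⟩
  have hstep : ∀ n, (h (n + 1)).natDegree = n + 1 ∧ (h (n + 1)).coeff 0 = c (n + 1) ∧
      (h (n + 1)).coeff (n + 1) = B (n + 1) ∧ TopF F (h (n + 1)) = C ((n + 1 : ℕ) : ℝ) * h n := by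
    intro n
    have hs := hnext n (h n) (hinv n).1 (hinv n).2
    rw [← hsucc n] at hs
    exact hs
  refine ⟨h, ⟨h0, ?_⟩, ?_⟩
  · intro n hn
    obtain ⟨m, rfl⟩ : ∃ m, n = m + 1 := ⟨n - 1, by omega⟩
    obtain ⟨hd, hc0, hcn, hT⟩ := hstep m
    refine ⟨hd, hc0, ?_, ?_⟩
    · show (h (m + 1)).leadingCoeff = B (m + 1)
      rw [Polynomial.leadingCoeff, hd]
      exact hcn
    · intro x hx
      exact (cond_iff F hF (h (m + 1)) (h m) (m + 1)).mpr hT x hx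
  · intro h' ⟨h0', hp'⟩
    have heq : ∀ n, h' n = h n := by
      intro n
      induction n with
      | zero => rw [h0', h0]
      | succ m ih =>
        obtain ⟨hd', hc0', hl', he'⟩ := hp' (m + 1) (by omega)
        have hT' : TopF F (h' (m + 1)) = C ((m + 1 : ℕ) : ℝ) * h m := by
          have := (cond_iff F hF (h' (m + 1)) (h' m) (m + 1)).mp (fun x hx => he' x hx)
          rw [ih] at this
          exact this
        have hcn' : (h' (m + 1)).coeff (m + 1) = B (m + 1) := by
          have hl2 : (h' (m + 1)).leadingCoeff = B (m + 1) := hl'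
          rw [Polynomial.leadingCoeff, hd'] at hl2
          exact hl2
        exact (key (m + 1) (by omega) (h m) (hinv m).1 (hinv m).2).unique
          ⟨hd', hc0', hcn', hT'⟩
          ⟨(hstep m).1, (hstep m).2.1, (hstep m).2.2.1, (hstep m).2.2.2⟩
    exact funext heq
end

section
/- Let Z^* be a (0,1)-valued random variable with density f on (0,1), let W be a [0,1)-valued random variable with P(W=0) = p₀ and with density f_W on (0,1), and let V be uniform on (0,1), with Z^*, W, V independent. Then the random variable L = Z^*(1−W) + WV has density f_L(u) = p₀ f(u) + ∫_0^u [ ∫_{1−(1−u)/(1−z)}^1 ξ^{−1} f_W(ξ) dξ ] f(z) dz + ∫_u^1 [ ∫_{1−u/z}^1 ξ^{−1} f_W(ξ) dξ ] f(z) dz for u ∈ (0,1). -/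
open MeasureTheory Set
open scoped ENNReal

noncomputable section Stmt13Aux

private def ρ13 : Measure ℝ := volume.restrict (Set.Ioo (0:ℝ) 1)

private instance : IsProbabilityMeasure ρ13 :=
  ⟨by rw [ρ13, Measure.restrict_apply_univ]; simp [Real.volume_Ioo]⟩

private def HH13 (s : Set ℝ) (f fW : ℝ → ℝ) (p : ℝ × ℝ) (u : ℝ) : ℝ≥0∞ :=
  (s ∩ Set.Ioo (p.1 * (1 - p.2)) (p.1 * (1 - p.2) + p.2)).indicator
    (fun _ => ENNReal.ofReal (f p.1) * ENNReal.ofReal (fW p.2) * ENNReal.ofReal p.2⁻¹) u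

private def dd13 (f fW : ℝ → ℝ) (u : ℝ) : ℝ≥0∞ :=
  ∫⁻ p, HH13 Set.univ f fW p u ∂(ρ13.prod ρ13)

private lemma HH13_meas {s : Set ℝ} (hs : MeasurableSet s) {f fW : ℝ → ℝ}
    (hf : Measurable f) (hfW : Measurable fW) :
    Measurable fun q : (ℝ × ℝ) × ℝ => HH13 s f fW q.1 q.2 := by
  have hQ : MeasurableSet {q : (ℝ × ℝ) × ℝ |
      q.2 ∈ s ∧ q.1.1 * (1 - q.1.2) < q.2 ∧ q.2 < q.1.1 * (1 - q.1.2) + q.1.2} := by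
    apply MeasurableSet.inter
    · exact measurable_snd hs
    apply MeasurableSet.inter
    · exact measurableSet_lt (by fun_prop) measurable_snd
    · exact measurableSet_lt measurable_snd (by fun_prop)
  have : (fun q : (ℝ × ℝ) × ℝ => HH13 s f fW q.1 q.2)
      = Set.indicator {q : (ℝ × ℝ) × ℝ |
          q.2 ∈ s ∧ q.1.1 * (1 - q.1.2) < q.2 ∧ q.2 < q.1.1 * (1 - q.1.2) + q.1.2}
        (fun q => ENNReal.ofReal (f q.1.1) * ENNReal.ofReal (fW q.1.2) * ENNReal.ofReal q.1.2⁻¹) := by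
    funext q
    simp only [HH13, Set.indicator_apply, Set.mem_inter_iff, Set.mem_Ioo, Set.mem_setOf_eq]
    rfl
  rw [this]
  exact Measurable.indicator (by fun_prop) hQ

private lemma dd13_meas {f fW : ℝ → ℝ} (hf : Measurable f) (hfW : Measurable fW) :
    Measurable (dd13 f fW) := by
  apply Measurable.lintegral_prod_right'
    (f := fun q : ℝ × (ℝ × ℝ) => HH13 Set.univ f fW q.2 q.1)
  exact (HH13_meas MeasurableSet.univ hf hfW).comp measurable_swap


private lemma ρ13_def : ρ13 = volume.restrict (Set.Ioo (0:ℝ) 1) := rfl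

private lemma slice13 (c ξ : ℝ) (hξ : 0 < ξ) {s : Set ℝ} (hs : MeasurableSet s) :
    ρ13 ((fun v => c + ξ * v) ⁻¹' s) =
      ENNReal.ofReal ξ⁻¹ * volume (s ∩ Set.Ioo c (c + ξ)) := by
  have hg : Measurable fun v : ℝ => c + ξ * v := by fun_prop
  rw [ρ13, Measure.restrict_apply (hg hs)]
  have hset : (fun v => c + ξ * v) ⁻¹' s ∩ Set.Ioo 0 1
      = (fun v => c + ξ * v) ⁻¹' (s ∩ Set.Ioo c (c + ξ)) := by
    ext v
    simp only [Set.mem_inter_iff, Set.mem_preimage, Set.mem_Ioo]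
    constructor
    · rintro ⟨h1, h2, h3⟩; exact ⟨h1, by nlinarith, by nlinarith⟩
    · rintro ⟨h1, h2, h3⟩; exact ⟨h1, by nlinarith, by nlinarith⟩
  rw [hset]
  have hpre : (fun v : ℝ => c + ξ * v) ⁻¹' (s ∩ Set.Ioo c (c + ξ))
      = (fun v : ℝ => ξ * v) ⁻¹' ((fun x : ℝ => c + x) ⁻¹' (s ∩ Set.Ioo c (c + ξ))) := rfl
  rw [hpre, Real.volume_preimage_mul_left hξ.ne',
    measure_preimage_add volume c _, abs_of_pos (inv_pos.2 hξ)]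

private lemma prod_wd13 (μ : Measure ℝ) {β : Type*} [MeasurableSpace β] (ν : Measure β)
    [SigmaFinite μ] [SigmaFinite ν] (g : ℝ → ℝ) (r : β → ℝ)
    (hg : Measurable g) (hr : Measurable r) :
    (μ.withDensity fun x => ENNReal.ofReal (g x)).prod
      (ν.withDensity fun y => ENNReal.ofReal (r y))
    = (μ.prod ν).withDensity fun p => ENNReal.ofReal (g p.1) * ENNReal.ofReal (r p.2) := by
  refine Measure.prod_eq fun s t hs ht => ?_
  rw [withDensity_apply _ (hs.prod ht), ← Measure.prod_restrict,
    lintegral_prod_mul hg.ennreal_ofReal.aemeasurable hr.ennreal_ofReal.aemeasurable,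
    withDensity_apply _ hs, withDensity_apply _ ht]

private lemma prod_wd13' (μ : Measure ℝ) {β : Type*} [MeasurableSpace β] (ν : Measure β)
    [SigmaFinite μ] [SigmaFinite ν] (g : ℝ → ℝ) (hg : Measurable g) :
    (μ.withDensity fun x => ENNReal.ofReal (g x)).prod ν
    = (μ.prod ν).withDensity fun p => ENNReal.ofReal (g p.1) := by
  refine Measure.prod_eq fun s t hs ht => ?_
  rw [withDensity_apply _ (hs.prod ht), ← Measure.prod_restrict]
  rw [show (fun p : ℝ × β => ENNReal.ofReal (g p.1))
      = fun p : ℝ × β => ENNReal.ofReal (g p.1) * (fun _ : β => (1:ℝ≥0∞)) p.2 from by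
    funext p; simp]
  rw [lintegral_prod_mul hg.ennreal_ofReal.aemeasurable aemeasurable_const,
    lintegral_one, Measure.restrict_apply_univ, withDensity_apply _ hs]

private lemma pieceB13 {f fW : ℝ → ℝ} (hf : Measurable f) (hfW : Measurable fW) :
    Measure.map (fun p : ℝ × ℝ × ℝ => p.1 * (1 - p.2.1) + p.2.1 * p.2.2)
      ((ρ13.withDensity fun z => ENNReal.ofReal (f z)).prod
        ((ρ13.withDensity fun w => ENNReal.ofReal (fW w)).prod ρ13))
    = ρ13.withDensity (dd13 f fW) := by
  have hT : Measurable fun p : ℝ × ℝ × ℝ => p.1 * (1 - p.2.1) + p.2.1 * p.2.2 := by fun_prop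
  have hM : (ρ13.withDensity fun z => ENNReal.ofReal (f z)).prod
        ((ρ13.withDensity fun w => ENNReal.ofReal (fW w)).prod ρ13)
      = (ρ13.prod (ρ13.prod ρ13)).withDensity
          (fun p => ENNReal.ofReal (f p.1) * ENNReal.ofReal (fW p.2.1)) := by
    rw [prod_wd13' ρ13 ρ13 fW hfW,
      prod_wd13 ρ13 (ρ13.prod ρ13) f (fun q => fW q.1) hf (hfW.comp measurable_fst)]
  ext s hs
  have hF : Measurable fun p : ℝ × ℝ × ℝ => ENNReal.ofReal (f p.1) * ENNReal.ofReal (fW p.2.1) :=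
    by fun_prop
  have hΦ : Measurable (((fun p : ℝ × ℝ × ℝ => p.1 * (1 - p.2.1) + p.2.1 * p.2.2) ⁻¹' s).indicator
      fun p : ℝ × ℝ × ℝ => ENNReal.ofReal (f p.1) * ENNReal.ofReal (fW p.2.1)) :=
    hF.indicator (hT hs)
  rw [Measure.map_apply hT hs, hM, withDensity_apply _ (hT hs), withDensity_apply _ hs,
    ← lintegral_indicator (hT hs), lintegral_prod _ hΦ.aemeasurable]
  have key : ∀ z : ℝ, ∀ ξ ∈ Set.Ioo (0:ℝ) 1,
      (∫⁻ v, (((fun p : ℝ × ℝ × ℝ => p.1 * (1 - p.2.1) + p.2.1 * p.2.2) ⁻¹' s).indicator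
          (fun p : ℝ × ℝ × ℝ => ENNReal.ofReal (f p.1) * ENNReal.ofReal (fW p.2.1)) (z, ξ, v)) ∂ρ13)
        = ∫⁻ u, HH13 s f fW (z, ξ) u ∂volume := by
    intro z ξ hξ
    have h1 : (fun v => (((fun p : ℝ × ℝ × ℝ => p.1 * (1 - p.2.1) + p.2.1 * p.2.2) ⁻¹' s).indicator
          (fun p : ℝ × ℝ × ℝ => ENNReal.ofReal (f p.1) * ENNReal.ofReal (fW p.2.1)) (z, ξ, v)))
        = Set.indicator ((fun v => z * (1 - ξ) + ξ * v) ⁻¹' s)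
            (fun _ => ENNReal.ofReal (f z) * ENNReal.ofReal (fW ξ)) := by
      funext v
      rfl
    rw [h1, lintegral_indicator_const
        ((show Measurable fun v : ℝ => z * (1 - ξ) + ξ * v by fun_prop) hs),
      slice13 _ _ hξ.1 hs]
    simp only [HH13]
    rw [lintegral_indicator_const (hs.inter measurableSet_Ioo)]
    ring
  calc
    ∫⁻ z, ∫⁻ q, (((fun p : ℝ × ℝ × ℝ => p.1 * (1 - p.2.1) + p.2.1 * p.2.2) ⁻¹' s).indicator
          (fun p : ℝ × ℝ × ℝ => ENNReal.ofReal (f p.1) * ENNReal.ofReal (fW p.2.1)) (z, q))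
        ∂(ρ13.prod ρ13) ∂ρ13
      = ∫⁻ z, ∫⁻ ξ, (∫⁻ u, HH13 s f fW (z, ξ) u ∂volume) ∂ρ13 ∂ρ13 := by
        refine lintegral_congr fun z => ?_
        rw [lintegral_prod (fun q : ℝ × ℝ =>
            (((fun p : ℝ × ℝ × ℝ => p.1 * (1 - p.2.1) + p.2.1 * p.2.2) ⁻¹' s).indicator
              (fun p : ℝ × ℝ × ℝ => ENNReal.ofReal (f p.1) * ENNReal.ofReal (fW p.2.1)) (z, q)))
            ((hΦ.comp measurable_prodMk_left).aemeasurable)]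
        rw [ρ13_def]
        refine setLIntegral_congr_fun_ae measurableSet_Ioo (ae_of_all _ fun ξ hξ => ?_)
        rw [ρ13_def] at key
        exact key z ξ hξ
    _ = ∫⁻ p, (∫⁻ u, HH13 s f fW p u ∂volume) ∂(ρ13.prod ρ13) :=
        (lintegral_prod _ (Measurable.lintegral_prod_right'
          (HH13_meas hs hf hfW)).aemeasurable).symm
    _ = ∫⁻ u, ∫⁻ p, HH13 s f fW p u ∂(ρ13.prod ρ13) ∂volume :=
        lintegral_lintegral_swap (HH13_meas hs hf hfW).aemeasurable
    _ = ∫⁻ u, s.indicator (dd13 f fW) u ∂volume := by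
        refine lintegral_congr fun u => ?_
        by_cases hu : u ∈ s
        · rw [Set.indicator_of_mem hu, dd13]
          refine lintegral_congr fun p => ?_
          simp only [HH13]
          by_cases h2 : u ∈ Set.Ioo (p.1 * (1 - p.2)) (p.1 * (1 - p.2) + p.2)
          · have e1 : u ∈ s ∩ Set.Ioo (p.1 * (1 - p.2)) (p.1 * (1 - p.2) + p.2) := ⟨hu, h2⟩
            have e2 : u ∈ (Set.univ : Set ℝ) ∩
                Set.Ioo (p.1 * (1 - p.2)) (p.1 * (1 - p.2) + p.2) := ⟨trivial, h2⟩
            rw [Set.indicator_of_mem e1, Set.indicator_of_mem e2]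
          · rw [Set.indicator_of_notMem (fun h => h2 h.2),
              Set.indicator_of_notMem (fun h => h2 h.2)]
        · rw [Set.indicator_of_notMem hu]
          have h0 : ∀ p : ℝ × ℝ, HH13 s f fW p u = 0 := fun p =>
            Set.indicator_of_notMem (fun h => hu h.1) _
          simp [h0]
    _ = ∫⁻ u in s, dd13 f fW u ∂volume := lintegral_indicator hs _
    _ = ∫⁻ u in s, dd13 f fW u ∂ρ13 := by
        have hdd0 : ∀ u ∉ Set.Ioo (0:ℝ) 1, dd13 f fW u = 0 := by
          intro u hu
          rw [dd13, ρ13_def, Measure.prod_restrict]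
          have h0 : ∀ p ∈ (Set.Ioo (0:ℝ) 1) ×ˢ (Set.Ioo (0:ℝ) 1),
              HH13 Set.univ f fW p u = 0 := by
            intro p hp
            simp only [Set.mem_prod, Set.mem_Ioo] at hp
            obtain ⟨⟨hp1, hp2⟩, hq1, hq2⟩ := hp
            simp only [HH13]
            apply Set.indicator_of_notMem
            rintro ⟨-, h1, h2⟩
            simp only [Set.mem_Ioo] at hu
            exact hu ⟨by nlinarith, by nlinarith⟩
          rw [setLIntegral_congr_fun_ae (measurableSet_Ioo.prod measurableSet_Ioo)
            (ae_of_all _ h0)]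
          exact lintegral_zero
        have hind : dd13 f fW = (Set.Ioo (0:ℝ) 1).indicator (dd13 f fW) := by
          funext u
          by_cases hu : u ∈ Set.Ioo (0:ℝ) 1
          · rw [Set.indicator_of_mem hu]
          · rw [Set.indicator_of_notMem hu, hdd0 u hu]
        rw [ρ13_def, Measure.restrict_restrict hs]
        conv_lhs => rw [hind]
        rw [lintegral_indicator measurableSet_Ioo, Measure.restrict_restrict measurableSet_Ioo,
          Set.inter_comm]

private lemma dd13_eq {f fW : ℝ → ℝ} (hf : Measurable f) (hfW : Measurable fW)
    {u : ℝ} (hu : u ∈ Set.Ioo (0:ℝ) 1) :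
    dd13 f fW u
      = (∫⁻ z in Set.Ioo (0:ℝ) u, (∫⁻ ξ in Set.Ioo (1 - (1 - u) / (1 - z)) 1,
            ENNReal.ofReal ξ⁻¹ * ENNReal.ofReal (fW ξ)) * ENNReal.ofReal (f z))
        + ∫⁻ z in Set.Ioo u 1, (∫⁻ ξ in Set.Ioo (1 - u / z) 1,
            ENNReal.ofReal ξ⁻¹ * ENNReal.ofReal (fW ξ)) * ENNReal.ofReal (f z) := by
  obtain ⟨hu0, hu1⟩ := hu
  have hjm : Measurable fun p : ℝ × ℝ => HH13 Set.univ f fW p u :=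
    (HH13_meas MeasurableSet.univ hf hfW).comp (measurable_id.prodMk measurable_const)
  rw [dd13, lintegral_prod _ hjm.aemeasurable, ρ13_def]
  have region1 : ∀ z ∈ Set.Ioo (0:ℝ) u,
      (∫⁻ ξ in Set.Ioo (0:ℝ) 1, HH13 Set.univ f fW (z, ξ) u)
        = (∫⁻ ξ in Set.Ioo (1 - (1 - u) / (1 - z)) 1,
            ENNReal.ofReal ξ⁻¹ * ENNReal.ofReal (fW ξ)) * ENNReal.ofReal (f z) := by
    intro z hz
    obtain ⟨hz0, hzu⟩ := hz
    have hz1 : z < 1 := lt_trans hzu hu1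
    have h1z : 0 < 1 - z := by linarith
    have haeq : 1 - (1 - u) / (1 - z) = (u - z) / (1 - z) := by field_simp; ring
    have ha0 : 0 < 1 - (1 - u) / (1 - z) := by
      rw [haeq]; exact div_pos (by linarith) h1z
    have hpt : ∀ ξ ∈ Set.Ioo (0:ℝ) 1, HH13 Set.univ f fW (z, ξ) u
        = (Set.Ioo (1 - (1 - u) / (1 - z)) 1).indicator
            (fun ξ => ENNReal.ofReal (f z) * ENNReal.ofReal (fW ξ) * ENNReal.ofReal ξ⁻¹) ξ := by
      intro ξ hξ
      obtain ⟨hξ0, hξ1⟩ := hξ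
      simp only [HH13]
      by_cases hc : 1 - (1 - u) / (1 - z) < ξ
      · have hc' : u - z < ξ * (1 - z) := by
          rw [haeq, div_lt_iff₀ h1z] at hc; linarith [hc]
        have hmem1 : u ∈ Set.univ ∩ Set.Ioo (z * (1 - ξ)) (z * (1 - ξ) + ξ) :=
          ⟨trivial, by nlinarith, by nlinarith⟩
        have hmem2 : ξ ∈ Set.Ioo (1 - (1 - u) / (1 - z)) 1 := ⟨hc, hξ1⟩
        rw [Set.indicator_of_mem hmem1, Set.indicator_of_mem hmem2]
      · have hnm : u ∉ Set.univ ∩ Set.Ioo (z * (1 - ξ)) (z * (1 - ξ) + ξ) := by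
          rintro ⟨-, h1, h2⟩
          apply hc
          rw [haeq, div_lt_iff₀ h1z]
          nlinarith
        rw [Set.indicator_of_notMem hnm,
          Set.indicator_of_notMem (fun hmem => hc hmem.1)]
    rw [setLIntegral_congr_fun_ae measurableSet_Ioo (ae_of_all _ hpt),
      lintegral_indicator measurableSet_Ioo, Measure.restrict_restrict measurableSet_Ioo,
      show Set.Ioo (1 - (1 - u) / (1 - z)) 1 ∩ Set.Ioo 0 1 = Set.Ioo (1 - (1 - u) / (1 - z)) 1
        from Set.inter_eq_left.2 (fun x hx => ⟨ha0.trans hx.1, hx.2⟩)]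
    have hcm : ∀ ξ : ℝ, ENNReal.ofReal (f z) * ENNReal.ofReal (fW ξ) * ENNReal.ofReal ξ⁻¹
        = (ENNReal.ofReal ξ⁻¹ * ENNReal.ofReal (fW ξ)) * ENNReal.ofReal (f z) := fun ξ => by ring
    simp_rw [hcm]
    rw [lintegral_mul_const _ (by fun_prop)]
  have region2 : ∀ z ∈ Set.Ioo u 1,
      (∫⁻ ξ in Set.Ioo (0:ℝ) 1, HH13 Set.univ f fW (z, ξ) u)
        = (∫⁻ ξ in Set.Ioo (1 - u / z) 1,
            ENNReal.ofReal ξ⁻¹ * ENNReal.ofReal (fW ξ)) * ENNReal.ofReal (f z) := by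
    intro z hz
    obtain ⟨hzu, hz1⟩ := hz
    have hz0 : 0 < z := lt_trans hu0 hzu
    have ha0 : 0 < 1 - u / z := by
      have : u / z < 1 := (div_lt_one hz0).2 hzu
      linarith
    have hpt : ∀ ξ ∈ Set.Ioo (0:ℝ) 1, HH13 Set.univ f fW (z, ξ) u
        = (Set.Ioo (1 - u / z) 1).indicator
            (fun ξ => ENNReal.ofReal (f z) * ENNReal.ofReal (fW ξ) * ENNReal.ofReal ξ⁻¹) ξ := by
      intro ξ hξ
      obtain ⟨hξ0, hξ1⟩ := hξ
      simp only [HH13]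
      by_cases hc : 1 - u / z < ξ
      · have hc' : z * (1 - ξ) < u := by
          have h2 : 1 - ξ < u / z := by linarith
          calc z * (1 - ξ) < z * (u / z) := by
                exact mul_lt_mul_of_pos_left h2 hz0
          _ = u := by field_simp
        have hmem1 : u ∈ Set.univ ∩ Set.Ioo (z * (1 - ξ)) (z * (1 - ξ) + ξ) :=
          ⟨trivial, hc', by nlinarith⟩
        have hmem2 : ξ ∈ Set.Ioo (1 - u / z) 1 := ⟨hc, hξ1⟩
        rw [Set.indicator_of_mem hmem1, Set.indicator_of_mem hmem2]
      · have hnm : u ∉ Set.univ ∩ Set.Ioo (z * (1 - ξ)) (z * (1 - ξ) + ξ) := by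
          rintro ⟨-, h1, h2⟩
          apply hc
          have : z * (1 - ξ) < u := h1
          have h3 : 1 - ξ < u / z := by
            rw [lt_div_iff₀ hz0]; nlinarith
          linarith
        rw [Set.indicator_of_notMem hnm,
          Set.indicator_of_notMem (fun hmem => hc hmem.1)]
    rw [setLIntegral_congr_fun_ae measurableSet_Ioo (ae_of_all _ hpt),
      lintegral_indicator measurableSet_Ioo, Measure.restrict_restrict measurableSet_Ioo,
      show Set.Ioo (1 - u / z) 1 ∩ Set.Ioo 0 1 = Set.Ioo (1 - u / z) 1
        from Set.inter_eq_left.2 (fun x hx => ⟨ha0.trans hx.1, hx.2⟩)]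
    have hcm : ∀ ξ : ℝ, ENNReal.ofReal (f z) * ENNReal.ofReal (fW ξ) * ENNReal.ofReal ξ⁻¹
        = (ENNReal.ofReal ξ⁻¹ * ENNReal.ofReal (fW ξ)) * ENNReal.ofReal (f z) := fun ξ => by ring
    simp_rw [hcm]
    rw [lintegral_mul_const _ (by fun_prop)]
  have hne : ∀ᵐ z : ℝ ∂volume, z ≠ u := by
    refine ae_iff.2 ?_
    simp only [ne_eq, not_not]
    exact measure_singleton u
  have hdisj : Disjoint (Set.Ioo (0:ℝ) u) (Set.Ico u 1) :=
    Set.disjoint_left.2 fun x hx hx' => absurd hx.2 (not_lt.2 hx'.1)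
  calc
    ∫⁻ z in Set.Ioo (0:ℝ) 1, ∫⁻ ξ in Set.Ioo (0:ℝ) 1, HH13 Set.univ f fW (z, ξ) u
      = ∫⁻ z in Set.Ioo (0:ℝ) 1,
          (if z < u then
            (∫⁻ ξ in Set.Ioo (1 - (1 - u) / (1 - z)) 1,
              ENNReal.ofReal ξ⁻¹ * ENNReal.ofReal (fW ξ)) * ENNReal.ofReal (f z)
          else
            (∫⁻ ξ in Set.Ioo (1 - u / z) 1,
              ENNReal.ofReal ξ⁻¹ * ENNReal.ofReal (fW ξ)) * ENNReal.ofReal (f z)) := by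
        refine setLIntegral_congr_fun_ae measurableSet_Ioo ?_
        filter_upwards [hne] with z hzne hzmem
        by_cases hlt : z < u
        · rw [if_pos hlt]
          exact region1 z ⟨hzmem.1, hlt⟩
        · rw [if_neg hlt]
          exact region2 z ⟨lt_of_le_of_ne (not_lt.1 hlt) (Ne.symm hzne), hzmem.2⟩
    _ = ∫⁻ z in Set.Ioo (0:ℝ) u ∪ Set.Ico u 1,
          (if z < u then
            (∫⁻ ξ in Set.Ioo (1 - (1 - u) / (1 - z)) 1,
              ENNReal.ofReal ξ⁻¹ * ENNReal.ofReal (fW ξ)) * ENNReal.ofReal (f z)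
          else
            (∫⁻ ξ in Set.Ioo (1 - u / z) 1,
              ENNReal.ofReal ξ⁻¹ * ENNReal.ofReal (fW ξ)) * ENNReal.ofReal (f z)) := by
        rw [Set.Ioo_union_Ico_eq_Ioo hu0 hu1.le]
    _ = _ := by
        rw [lintegral_union measurableSet_Ico hdisj,
          setLIntegral_congr (Ioo_ae_eq_Ico (a := u) (b := (1:ℝ))).symm]
        congr 1
        · refine setLIntegral_congr_fun_ae measurableSet_Ioo (ae_of_all _ fun z hz => ?_)
          rw [if_pos hz.2]
        · refine setLIntegral_congr_fun_ae measurableSet_Ioo (ae_of_all _ fun z hz => ?_)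
          rw [if_neg (not_lt.2 hz.1.le)]

private lemma paramInt_meas13 {fW : ℝ → ℝ} (hfW : Measurable fW) {a : ℝ → ℝ}
    (ha : Measurable a) :
    Measurable fun z : ℝ => ∫ ξ in Set.Ioo (a z) 1, ξ⁻¹ * fW ξ := by
  have h1 : ∀ z : ℝ, (∫ ξ in Set.Ioo (a z) 1, ξ⁻¹ * fW ξ)
      = ∫ ξ, (Set.Ioo (a z) 1).indicator (fun ξ => ξ⁻¹ * fW ξ) ξ := fun z =>
    (integral_indicator measurableSet_Ioo).symm
  simp_rw [h1]
  have hQ : MeasurableSet {q : ℝ × ℝ | a q.1 < q.2 ∧ q.2 < 1} :=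
    (measurableSet_lt (ha.comp measurable_fst) measurable_snd).inter
      (measurableSet_lt measurable_snd measurable_const)
  have hjoint : StronglyMeasurable fun q : ℝ × ℝ =>
      (Set.Ioo (a q.1) 1).indicator (fun ξ => ξ⁻¹ * fW ξ) q.2 := by
    have heq : (fun q : ℝ × ℝ => (Set.Ioo (a q.1) 1).indicator (fun ξ => ξ⁻¹ * fW ξ) q.2)
        = Set.indicator {q : ℝ × ℝ | a q.1 < q.2 ∧ q.2 < 1} (fun q => q.2⁻¹ * fW q.2) := by
      funext q; rfl
    rw [heq]
    exact (Measurable.indicator (by fun_prop) hQ).stronglyMeasurable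
  exact hjoint.integral_prod_right'.measurable

private lemma inner_conv13 {fW : ℝ → ℝ} (hfW : Measurable fW) (hfWnn : ∀ x, 0 ≤ fW x)
    (hfWint : IntegrableOn fW (Set.Ioo (0:ℝ) 1) volume) {a : ℝ} (ha : 0 < a) :
    (∫⁻ ξ in Set.Ioo a 1, ENNReal.ofReal ξ⁻¹ * ENNReal.ofReal (fW ξ))
      = ENNReal.ofReal (∫ ξ in Set.Ioo a 1, ξ⁻¹ * fW ξ) := by
  by_cases ha1 : a < 1
  · have hsub : Set.Ioo a 1 ⊆ Set.Ioo (0:ℝ) 1 := fun x hx => ⟨ha.trans hx.1, hx.2⟩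
    have hint : IntegrableOn (fun ξ => ξ⁻¹ * fW ξ) (Set.Ioo a 1) volume := by
      refine Integrable.mono' ((hfWint.mono_set hsub).const_mul a⁻¹)
        ((measurable_inv.mul hfW).aestronglyMeasurable) ?_
      refine (ae_restrict_iff' measurableSet_Ioo).2 (ae_of_all _ fun ξ hξ => ?_)
      have hξ0 : 0 < ξ := ha.trans hξ.1
      rw [Real.norm_eq_abs, abs_of_nonneg (mul_nonneg (inv_nonneg.2 hξ0.le) (hfWnn ξ))]
      exact mul_le_mul_of_nonneg_right
        (inv_anti₀ ha hξ.1.le) (hfWnn ξ)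
    have hnn : 0 ≤ᵐ[volume.restrict (Set.Ioo a 1)] fun ξ => ξ⁻¹ * fW ξ := by
      refine (ae_restrict_iff' measurableSet_Ioo).2 (ae_of_all _ fun ξ hξ => ?_)
      exact mul_nonneg (inv_nonneg.2 (ha.trans hξ.1).le) (hfWnn ξ)
    rw [MeasureTheory.ofReal_integral_eq_lintegral_ofReal hint hnn]
    refine setLIntegral_congr_fun_ae measurableSet_Ioo (ae_of_all _ fun ξ hξ => ?_)
    rw [ENNReal.ofReal_mul (inv_nonneg.2 (ha.trans hξ.1).le)]
  · rw [Set.Ioo_eq_empty ha1]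
    simp

private lemma smul_prod13 {α β : Type*} [MeasurableSpace α] [MeasurableSpace β]
    (c : ℝ≥0∞) (μ : Measure α) (ν : Measure β) [SFinite μ] [SFinite ν] :
    (c • μ).prod ν = c • (μ.prod ν) := by
  ext s hs
  rw [Measure.prod_apply hs, Measure.smul_apply, Measure.prod_apply hs,
    lintegral_smul_measure]

private lemma prod_smul13 {α β : Type*} [MeasurableSpace α] [MeasurableSpace β]
    (c : ℝ≥0∞) (μ : Measure α) (ν : Measure β) [SFinite μ] [SFinite ν] :
    μ.prod (c • ν) = c • (μ.prod ν) := by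
  ext s hs
  rw [Measure.prod_apply hs, Measure.smul_apply, Measure.prod_apply hs]
  simp only [Measure.smul_apply, smul_eq_mul]
  rw [← lintegral_const_mul c (measurable_measure_prodMk_left hs)]

private lemma outer_conv13 {f fW : ℝ → ℝ} (hf : Measurable f) (hfW : Measurable fW)
    (hfnn : ∀ x, 0 ≤ f x) (hfWnn : ∀ x, 0 ≤ fW x)
    (hfWint : IntegrableOn fW (Set.Ioo (0:ℝ) 1) volume)
    {a : ℝ → ℝ} (ha : Measurable a) {lo hi : ℝ} (hapos : ∀ z ∈ Set.Ioo lo hi, 0 < a z)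
    (hfin : (∫⁻ z in Set.Ioo lo hi, (∫⁻ ξ in Set.Ioo (a z) 1,
        ENNReal.ofReal ξ⁻¹ * ENNReal.ofReal (fW ξ)) * ENNReal.ofReal (f z)) ≠ ∞) :
    (∫⁻ z in Set.Ioo lo hi, (∫⁻ ξ in Set.Ioo (a z) 1,
        ENNReal.ofReal ξ⁻¹ * ENNReal.ofReal (fW ξ)) * ENNReal.ofReal (f z))
      = ENNReal.ofReal (∫ z in Set.Ioo lo hi, (∫ ξ in Set.Ioo (a z) 1, ξ⁻¹ * fW ξ) * f z) := by
  have hGnn : ∀ z ∈ Set.Ioo lo hi, 0 ≤ (∫ ξ in Set.Ioo (a z) 1, ξ⁻¹ * fW ξ) := fun z hz =>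
    setIntegral_nonneg measurableSet_Ioo fun ξ hξ =>
      mul_nonneg (inv_nonneg.2 ((hapos z hz).trans hξ.1).le) (hfWnn ξ)
  have hstep : ∀ z ∈ Set.Ioo lo hi,
      (∫⁻ ξ in Set.Ioo (a z) 1, ENNReal.ofReal ξ⁻¹ * ENNReal.ofReal (fW ξ))
          * ENNReal.ofReal (f z)
        = ENNReal.ofReal ((∫ ξ in Set.Ioo (a z) 1, ξ⁻¹ * fW ξ) * f z) := fun z hz => by
    rw [inner_conv13 hfW hfWnn hfWint (hapos z hz), ← ENNReal.ofReal_mul (hGnn z hz)]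
  rw [setLIntegral_congr_fun_ae measurableSet_Ioo (ae_of_all _ hstep)] at hfin ⊢
  have hmeas : AEStronglyMeasurable (fun z => (∫ ξ in Set.Ioo (a z) 1, ξ⁻¹ * fW ξ) * f z)
      (volume.restrict (Set.Ioo lo hi)) :=
    ((paramInt_meas13 hfW ha).mul hf).aestronglyMeasurable
  have hnn : 0 ≤ᵐ[volume.restrict (Set.Ioo lo hi)]
      fun z => (∫ ξ in Set.Ioo (a z) 1, ξ⁻¹ * fW ξ) * f z :=
    (ae_restrict_iff' measurableSet_Ioo).2 (ae_of_all _ fun z hz =>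
      mul_nonneg (hGnn z hz) (hfnn z))
  have hint : IntegrableOn (fun z => (∫ ξ in Set.Ioo (a z) 1, ξ⁻¹ * fW ξ) * f z)
      (Set.Ioo lo hi) volume := by
    refine ⟨hmeas, ?_⟩
    rw [hasFiniteIntegral_iff_ofReal hnn]
    exact lt_top_iff_ne_top.2 hfin
  exact (MeasureTheory.ofReal_integral_eq_lintegral_ofReal hint hnn).symm

end Stmt13Aux

/-- density of `L = Z^*(1-W) + WV` where `Z^*` has density `f` on `(0,1)`,
`W` is `[0,1)`-valued with atom `p₀` at 0 and density `f_W` on `(0,1)`, `V` is uniform on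
`(0,1)`, and `Z^*, W, V` are independent. -/
theorem stmt13 {Ω : Type*} [MeasurableSpace Ω] (ℙ : Measure Ω) [IsProbabilityMeasure ℙ]
    (Zs W V : Ω → ℝ)
    (hZsm : Measurable Zs) (hWm : Measurable W) (hVm : Measurable V)
    (f fW : ℝ → ℝ) (hf : Measurable f) (hfW : Measurable fW)
    (hfnn : ∀ x, 0 ≤ f x) (hfWnn : ∀ x, 0 ≤ fW x)
    (p₀ : ℝ) (hp₀ : 0 ≤ p₀)
    (hZs : Measure.map Zs ℙ =
      (volume.restrict (Set.Ioo (0:ℝ) 1)).withDensity (fun z => ENNReal.ofReal (f z)))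
    (hW : Measure.map W ℙ =
      ENNReal.ofReal p₀ • Measure.dirac (0:ℝ) +
      (volume.restrict (Set.Ioo (0:ℝ) 1)).withDensity (fun w => ENNReal.ofReal (fW w)))
    (hV : Measure.map V ℙ = volume.restrict (Set.Ioo (0:ℝ) 1))
    (hInd : ProbabilityTheory.iIndepFun ![Zs, W, V] ℙ) :
    Measure.map (fun ω => Zs ω * (1 - W ω) + W ω * V ω) ℙ
      = (volume.restrict (Set.Ioo (0:ℝ) 1)).withDensity (fun u => ENNReal.ofReal (
          p₀ * f u
          + (∫ z in Set.Ioo (0:ℝ) u,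
              (∫ ξ in Set.Ioo (1 - (1 - u) / (1 - z)) 1, ξ⁻¹ * fW ξ) * f z)
          + ∫ z in Set.Ioo u 1,
              (∫ ξ in Set.Ioo (1 - u / z) 1, ξ⁻¹ * fW ξ) * f z)) := by
  have hL : Measurable fun ω => Zs ω * (1 - W ω) + W ω * V ω := by fun_prop
  have hT : Measurable fun p : ℝ × ℝ × ℝ => p.1 * (1 - p.2.1) + p.2.1 * p.2.2 := by fun_prop
  have hmv : ∀ i, Measurable (![Zs, W, V] i) := by
    intro i; fin_cases i <;> simpa
  have hpairm : Measurable fun ω => (W ω, V ω) := hWm.prodMk hVm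
  have hWV : ProbabilityTheory.IndepFun W V ℙ := by
    simpa using hInd.indepFun (show (1 : Fin 3) ≠ 2 by decide)
  have hZWV : ProbabilityTheory.IndepFun Zs (fun ω => (W ω, V ω)) ℙ := by
    have h := hInd.indepFun_prodMk hmv 1 2 0 (by decide) (by decide)
    simpa using h.symm
  have hmapWV : ℙ.map (fun ω => (W ω, V ω)) = (ℙ.map W).prod (ℙ.map V) :=
    (ProbabilityTheory.indepFun_iff_map_prod_eq_prod_map_map
      hWm.aemeasurable hVm.aemeasurable).1 hWV
  have hmap3 : ℙ.map (fun ω => (Zs ω, (W ω, V ω)))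
      = (ℙ.map Zs).prod ((ℙ.map W).prod (ℙ.map V)) := by
    rw [← hmapWV]
    exact (ProbabilityTheory.indepFun_iff_map_prod_eq_prod_map_map
      hZsm.aemeasurable hpairm.aemeasurable).1 hZWV
  have hLmap : ℙ.map (fun ω => Zs ω * (1 - W ω) + W ω * V ω)
      = Measure.map (fun p : ℝ × ℝ × ℝ => p.1 * (1 - p.2.1) + p.2.1 * p.2.2)
          ((ℙ.map Zs).prod ((ℙ.map W).prod (ℙ.map V))) := by
    rw [← hmap3, Measure.map_map hT (hZsm.prodMk hpairm)]
    rfl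
  -- integrability of fW on (0,1)
  haveI : IsProbabilityMeasure (ℙ.map W) := Measure.isProbabilityMeasure_map hWm.aemeasurable
  have hWuniv : (ENNReal.ofReal p₀ • Measure.dirac (0:ℝ)
      + (volume.restrict (Set.Ioo (0:ℝ) 1)).withDensity fun w => ENNReal.ofReal (fW w))
        Set.univ = 1 := by
    rw [← hW]; exact measure_univ
  have hmass : (∫⁻ w, ENNReal.ofReal (fW w) ∂ρ13) ≤ 1 := by
    have h1 : ((volume.restrict (Set.Ioo (0:ℝ) 1)).withDensity
        fun w => ENNReal.ofReal (fW w)) Set.univ ≤ 1 := by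
      rw [← hWuniv, Measure.add_apply]; exact le_add_self
    rw [withDensity_apply _ MeasurableSet.univ, Measure.restrict_univ] at h1
    exact h1
  have hfWint : IntegrableOn fW (Set.Ioo (0:ℝ) 1) volume := by
    refine ⟨hfW.aestronglyMeasurable, ?_⟩
    rw [hasFiniteIntegral_iff_ofReal (ae_of_all _ hfWnn)]
    rw [ρ13_def] at hmass
    exact lt_of_le_of_lt hmass ENNReal.one_lt_top
  -- decompose the product measure and the pushforward
  have hsplit : ((ENNReal.ofReal p₀ • Measure.dirac (0:ℝ)
        + ρ13.withDensity fun w => ENNReal.ofReal (fW w)).prod ρ13)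
      = ENNReal.ofReal p₀ • ((Measure.dirac (0:ℝ)).prod ρ13)
        + (ρ13.withDensity fun w => ENNReal.ofReal (fW w)).prod ρ13 := by
    rw [Measure.add_prod, smul_prod13]
  have hsplit2 : (ρ13.withDensity fun z => ENNReal.ofReal (f z)).prod
      (ENNReal.ofReal p₀ • ((Measure.dirac (0:ℝ)).prod ρ13)
        + (ρ13.withDensity fun w => ENNReal.ofReal (fW w)).prod ρ13)
      = ENNReal.ofReal p₀ • ((ρ13.withDensity fun z => ENNReal.ofReal (f z)).prod
          ((Measure.dirac (0:ℝ)).prod ρ13))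
        + (ρ13.withDensity fun z => ENNReal.ofReal (f z)).prod
          ((ρ13.withDensity fun w => ENNReal.ofReal (fW w)).prod ρ13) := by
    rw [Measure.prod_add, prod_smul13]
  have hA : Measure.map (fun p : ℝ × ℝ × ℝ => p.1 * (1 - p.2.1) + p.2.1 * p.2.2)
      ((ρ13.withDensity fun z => ENNReal.ofReal (f z)).prod ((Measure.dirac (0:ℝ)).prod ρ13))
      = ρ13.withDensity fun z => ENNReal.ofReal (f z) := by
    rw [Measure.dirac_prod]
    have h1 : (ρ13.withDensity fun z => ENNReal.ofReal (f z)).prod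
          (Measure.map (Prod.mk (0:ℝ)) ρ13)
        = Measure.map (Prod.map (id : ℝ → ℝ) (Prod.mk (0:ℝ)))
            ((ρ13.withDensity fun z => ENNReal.ofReal (f z)).prod ρ13) := by
      conv_lhs => rw [← Measure.map_id (μ := ρ13.withDensity fun z => ENNReal.ofReal (f z))]
      exact Measure.map_prod_map _ _ measurable_id measurable_prodMk_left
    rw [h1, Measure.map_map hT (measurable_id.prodMap measurable_prodMk_left)]
    have h2 : ((fun p : ℝ × ℝ × ℝ => p.1 * (1 - p.2.1) + p.2.1 * p.2.2)
        ∘ Prod.map (id : ℝ → ℝ) (Prod.mk (0:ℝ))) = Prod.fst := by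
      funext p; simp [Prod.map]
    rw [h2, Measure.map_fst_prod, measure_univ, one_smul]
  have heqL : ℙ.map (fun ω => Zs ω * (1 - W ω) + W ω * V ω)
      = ENNReal.ofReal p₀ • (ρ13.withDensity fun z => ENNReal.ofReal (f z))
        + ρ13.withDensity (dd13 f fW) := by
    rw [hLmap, hZs, hW, hV, ← ρ13_def, hsplit, hsplit2, Measure.map_add _ _ hT,
      Measure.map_smul, hA, pieceB13 hf hfW]
  haveI : IsProbabilityMeasure (ℙ.map fun ω => Zs ω * (1 - W ω) + W ω * V ω) :=
    Measure.isProbabilityMeasure_map hL.aemeasurable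
  have hddfin : (∫⁻ u, dd13 f fW u ∂ρ13) ≠ ⊤ := by
    have h2 : (ENNReal.ofReal p₀ • (ρ13.withDensity fun z => ENNReal.ofReal (f z))
        + ρ13.withDensity (dd13 f fW)) Set.univ = 1 := by
      rw [← heqL]; exact measure_univ
    rw [Measure.add_apply] at h2
    have h1 : (ρ13.withDensity (dd13 f fW)) Set.univ ≤ 1 := h2 ▸ le_add_self
    rw [withDensity_apply _ MeasurableSet.univ, Measure.restrict_univ] at h1
    exact (lt_of_le_of_lt h1 ENNReal.one_lt_top).ne
  have haefin : ∀ᵐ u ∂ρ13, dd13 f fW u < ⊤ := ae_lt_top (dd13_meas hf hfW) hddfin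
  have haemem : ∀ᵐ u ∂ρ13, u ∈ Set.Ioo (0:ℝ) 1 := by
    rw [ρ13_def]; exact ae_restrict_mem measurableSet_Ioo
  rw [heqL, ← ρ13_def,
    ← withDensity_smul' (ENNReal.ofReal p₀) _ ENNReal.ofReal_ne_top,
    ← withDensity_add_left ((hf.ennreal_ofReal).const_smul (ENNReal.ofReal p₀))]
  refine withDensity_congr_ae ?_
  filter_upwards [haefin, haemem] with u hfin hu
  simp only [Pi.add_apply, Pi.smul_apply, smul_eq_mul]
  rw [dd13_eq hf hfW hu] at hfin ⊢
  obtain ⟨hu0, hu1⟩ := hu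
  have hAfin := (ENNReal.add_lt_top.1 hfin).1.ne
  have hBfin := (ENNReal.add_lt_top.1 hfin).2.ne
  have hpos1 : ∀ z ∈ Set.Ioo (0:ℝ) u, 0 < 1 - (1 - u) / (1 - z) := by
    intro z hz
    have hz1 : z < 1 := lt_trans hz.2 hu1
    have h1z : 0 < 1 - z := by linarith
    have h3 : (1 - u) / (1 - z) < 1 := by
      rw [div_lt_one h1z]; linarith [hz.2]
    linarith
  have hpos2 : ∀ z ∈ Set.Ioo u 1, 0 < 1 - u / z := by
    intro z hz
    have hz0 : 0 < z := lt_trans hu0 hz.1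
    have h3 : u / z < 1 := (div_lt_one hz0).2 hz.1
    linarith
  rw [outer_conv13 hf hfW hfnn hfWnn hfWint
      (a := fun z => 1 - (1 - u) / (1 - z)) (by fun_prop) hpos1 hAfin,
    outer_conv13 hf hfW hfnn hfWnn hfWint
      (a := fun z => 1 - u / z) (by fun_prop) hpos2 hBfin]
  have hA'nn : 0 ≤ ∫ z in Set.Ioo (0:ℝ) u,
      (∫ ξ in Set.Ioo (1 - (1 - u) / (1 - z)) 1, ξ⁻¹ * fW ξ) * f z :=
    setIntegral_nonneg measurableSet_Ioo fun z hz =>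
      mul_nonneg (setIntegral_nonneg measurableSet_Ioo fun ξ hξ =>
        mul_nonneg (inv_nonneg.2 ((hpos1 z hz).trans hξ.1).le) (hfWnn ξ)) (hfnn z)
  have hB'nn : 0 ≤ ∫ z in Set.Ioo u 1,
      (∫ ξ in Set.Ioo (1 - u / z) 1, ξ⁻¹ * fW ξ) * f z :=
    setIntegral_nonneg measurableSet_Ioo fun z hz =>
      mul_nonneg (setIntegral_nonneg measurableSet_Ioo fun ξ hξ =>
        mul_nonneg (inv_nonneg.2 ((hpos2 z hz).trans hξ.1).le) (hfWnn ξ)) (hfnn z)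
  rw [← ENNReal.ofReal_mul hp₀, ← ENNReal.ofReal_add hA'nn hB'nn,
    ← ENNReal.ofReal_add (mul_nonneg hp₀ (hfnn u)) (add_nonneg hA'nn hB'nn), add_assoc]
end

section
/- Let θ > 0 and let β : (0,1) → [0,∞) be continuous with ∫_0^1 z β(z) dz = 1 and satisfying θ ∫_z^1 y β(y) dy = z(1−z) β(z) for all z ∈ (0,1). Then β(z) = θ z^{−1} (1−z)^{θ−1} for all z ∈ (0,1). (This identifies the frequency spectrum of the Wright-Fisher infinitely-many-alleles model.) -/
open MeasureTheory Set Topology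

/-- the frequency spectrum of the Wright-Fisher infinitely-many-alleles model.
If `β` is continuous and nonnegative on `(0,1)` with `∫₀¹ z β(z) dz = 1` and
`θ ∫_z¹ y β(y) dy = z(1-z) β(z)` for all `z ∈ (0,1)`, then `β(z) = θ z⁻¹ (1-z)^{θ-1}`. -/
theorem stmt15 (θ : ℝ) (hθ : 0 < θ) (β : ℝ → ℝ)
    (hc : ContinuousOn β (Set.Ioo (0:ℝ) 1))
    (hnn : ∀ z ∈ Set.Ioo (0:ℝ) 1, 0 ≤ β z)
    (hnorm : ∫ z in Set.Ioo (0:ℝ) 1, z * β z = 1)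
    (heq : ∀ z ∈ Set.Ioo (0:ℝ) 1,
      θ * ∫ y in Set.Ioo z 1, y * β y = z * (1 - z) * β z) :
    ∀ z ∈ Set.Ioo (0:ℝ) 1, β z = θ * z⁻¹ * (1 - z) ^ (θ - 1) := by
  have hgc : ContinuousOn (fun y : ℝ => y * β y) (Ioo (0:ℝ) 1) :=
    continuousOn_id.mul hc
  have hg : IntegrableOn (fun y : ℝ => y * β y) (Ioo (0:ℝ) 1) := by
    by_contra h
    rw [MeasureTheory.integral_undef h] at hnorm
    norm_num at hnorm
  set F : ℝ → ℝ := fun t => ∫ y in Ioo t 1, y * β y with hFdef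
  -- derivative of F
  have hF' : ∀ x ∈ Ioo (0:ℝ) 1, HasDerivAt F (-(x * β x)) x := by
    intro x hx
    obtain ⟨hx0, hx1⟩ := hx
    set a := x / 2 with ha
    have ha0 : 0 < a := by positivity
    have hax : a < x := by simp only [ha]; linarith
    have ha1 : a < 1 := lt_trans hax hx1
    have key : ∀ w ∈ Ioo a 1,
        F w = (∫ y in Ioo a 1, y * β y) - ∫ y in a..w, y * β y := by
      intro w hw
      obtain ⟨hw1, hw2⟩ := hw
      have hsplit : Ioo a 1 = Ioc a w ∪ Ioo w 1 := by
        ext y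
        simp only [mem_Ioo, mem_Ioc, mem_union]
        constructor
        · rintro ⟨h1, h2⟩
          rcases le_or_gt y w with h | h
          · exact Or.inl ⟨h1, h⟩
          · exact Or.inr ⟨h, h2⟩
        · rintro (⟨h1, h2⟩ | ⟨h1, h2⟩)
          · exact ⟨h1, lt_of_le_of_lt h2 hw2⟩
          · exact ⟨lt_trans hw1 h1, h2⟩
      have hdisj : Disjoint (Ioc a w) (Ioo w 1) := by
        apply Set.disjoint_left.2
        rintro y ⟨_, hy2⟩ ⟨hy3, _⟩
        exact absurd hy3 (not_lt.2 hy2)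
      have hi1 : IntegrableOn (fun y : ℝ => y * β y) (Ioc a w) :=
        hg.mono_set (fun y hy => ⟨lt_of_lt_of_le ha0 (le_of_lt hy.1),
          lt_of_le_of_lt hy.2 hw2⟩)
      have hi2 : IntegrableOn (fun y : ℝ => y * β y) (Ioo w 1) :=
        hg.mono_set (fun y hy => ⟨lt_trans (lt_trans ha0 hw1) hy.1, hy.2⟩)
      have := MeasureTheory.setIntegral_union hdisj measurableSet_Ioo hi1 hi2
      rw [← hsplit] at this
      rw [intervalIntegral.integral_of_le (le_of_lt hw1), this, hFdef]
      ring
    have hint : IntervalIntegrable (fun y : ℝ => y * β y) volume a x := by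
      apply MeasureTheory.IntegrableOn.intervalIntegrable
      apply hg.mono_set
      rw [uIcc_of_le (le_of_lt hax)]
      exact fun y hy => ⟨lt_of_lt_of_le ha0 hy.1, lt_of_le_of_lt hy.2 hx1⟩
    have hmeas : StronglyMeasurableAtFilter (fun y : ℝ => y * β y) (𝓝 x) volume :=
      hgc.stronglyMeasurableAtFilter isOpen_Ioo x ⟨hx0, hx1⟩
    have hcont : ContinuousAt (fun y : ℝ => y * β y) x :=
      hgc.continuousAt (isOpen_Ioo.mem_nhds ⟨hx0, hx1⟩)
    have hd := (intervalIntegral.integral_hasDerivAt_right hint hmeas hcont).const_sub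
      (∫ y in Ioo a 1, y * β y)
    refine hd.congr_of_eventuallyEq ?_
    filter_upwards [isOpen_Ioo.mem_nhds (show x ∈ Ioo a 1 from ⟨hax, hx1⟩)] with w hw
    exact key w hw
  -- G has zero derivative
  set G : ℝ → ℝ := fun t => F t * (1 - t) ^ (-θ) with hGdef
  have hG' : ∀ x ∈ Ioo (0:ℝ) 1, HasDerivAt G 0 x := by
    intro x hx
    have h1 : (0:ℝ) < 1 - x := by linarith [hx.2]
    have hw : HasDerivAt (fun t : ℝ => (1 - t) ^ (-θ))
        (-1 * (-θ) * (1 - x) ^ (-θ - 1)) x :=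
      HasDerivAt.rpow_const ((hasDerivAt_id x).const_sub 1) (Or.inl h1.ne')
    have hprod := (hF' x hx).mul hw
    have hFx : θ * F x = x * (1 - x) * β x := heq x hx
    have hpow : (1 - x) ^ (-θ) = (1 - x) ^ (-θ - 1) * (1 - x) := by
      rw [← Real.rpow_add_one h1.ne' (-θ - 1)]
      norm_num
    have : -(x * β x) * (1 - x) ^ (-θ) + F x * (-1 * (-θ) * (1 - x) ^ (-θ - 1)) = 0 := by
      rw [hpow]
      linear_combination ((1 - x) ^ (-θ - 1)) * hFx
    rw [this] at hprod
    exact hprod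
  -- G is constant
  have hconst : ∀ x ∈ Ioo (0:ℝ) 1, G x = G (1/2) := by
    intro x hx
    have h12 : (1/2 : ℝ) ∈ Ioo (0:ℝ) 1 := by norm_num
    have := (convex_Ioo (0:ℝ) 1).norm_image_sub_le_of_norm_hasDerivWithin_le
      (C := 0) (f' := fun _ => (0:ℝ)) (fun w hw => (hG' w hw).hasDerivWithinAt)
      (fun w _ => by norm_num) h12 hx
    simp only [zero_mul, norm_le_zero_iff, sub_eq_zero] at this
    exact this
  set c : ℝ := G (1/2) with hcdef
  -- F z = c * (1-z)^θ
  have hGF : ∀ z ∈ Ioo (0:ℝ) 1, F z = c * (1 - z) ^ θ := by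
    intro z hz
    have h1 : (0:ℝ) < 1 - z := by linarith [hz.2]
    have h2 := hconst z hz
    have h3 : F z * (1 - z) ^ (-θ) = c := h2
    have h4 : (1 - z) ^ (-θ) * (1 - z) ^ θ = 1 := by
      rw [← Real.rpow_add h1]
      norm_num
    calc F z = F z * ((1 - z) ^ (-θ) * (1 - z) ^ θ) := by rw [h4]; ring
    _ = (F z * (1 - z) ^ (-θ)) * (1 - z) ^ θ := by ring
    _ = c * (1 - z) ^ θ := by rw [h3]
  -- z β z = θ c (1-z)^(θ-1)
  have hzb : ∀ z ∈ Ioo (0:ℝ) 1, z * β z = c * θ * (1 - z) ^ (θ - 1) := by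
    intro z hz
    have h1 : (0:ℝ) < 1 - z := by linarith [hz.2]
    have hFx : θ * F z = z * (1 - z) * β z := heq z hz
    have hpow : (1 - z) ^ θ = (1 - z) ^ (θ - 1) * (1 - z) := by
      rw [← Real.rpow_add_one h1.ne' (θ - 1)]
      norm_num
    rw [hGF z hz, hpow] at hFx
    have := mul_right_cancel₀ h1.ne' (by linear_combination hFx :
      (c * θ * (1 - z) ^ (θ - 1)) * (1 - z) = (z * β z) * (1 - z))
    linarith [this]
  -- compute c = 1 from normalization
  have hc1 : c = 1 := by
    have hre : ∫ z in Ioo (0:ℝ) 1, z * β z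
        = ∫ z in Ioo (0:ℝ) 1, c * θ * (1 - z) ^ (θ - 1) := by
      apply MeasureTheory.setIntegral_congr_fun measurableSet_Ioo
      intro z hz
      exact hzb z hz
    have hIoo : ∫ z in Ioo (0:ℝ) 1, c * θ * (1 - z) ^ (θ - 1)
        = ∫ z in (0:ℝ)..1, c * θ * (1 - z) ^ (θ - 1) := by
      rw [intervalIntegral.integral_of_le (by norm_num : (0:ℝ) ≤ 1),
        MeasureTheory.integral_Ioc_eq_integral_Ioo]
    have hcomp : ∫ z in (0:ℝ)..1, c * θ * (1 - z) ^ (θ - 1)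
        = ∫ z in (0:ℝ)..1, c * θ * z ^ (θ - 1) := by
      have := intervalIntegral.integral_comp_sub_left
        (a := (0:ℝ)) (b := 1) (fun z => c * θ * z ^ (θ - 1)) 1
      simpa using this
    have hrpow : ∫ z in (0:ℝ)..1, z ^ (θ - 1) = 1 / θ := by
      rw [integral_rpow (Or.inl (by linarith : (-1:ℝ) < θ - 1))]
      rw [show θ - 1 + 1 = θ by ring, Real.one_rpow, Real.zero_rpow hθ.ne']
      ring
    have hmul : ∫ z in (0:ℝ)..1, c * θ * z ^ (θ - 1)
        = c * θ * ∫ z in (0:ℝ)..1, z ^ (θ - 1) := by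
      rw [← intervalIntegral.integral_const_mul]
    have : c * θ * (1 / θ) = 1 := by
      rw [← hrpow, ← hmul, ← hcomp, ← hIoo, ← hre, hnorm]
    field_simp at this
    linarith
  -- conclude
  intro z hz
  have hz0 : z ≠ 0 := ne_of_gt hz.1
  have := hzb z hz
  rw [hc1] at this
  field_simp
  linarith [this]
end
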